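/- arXiv:1212.3231 — 4 statements merged into one kernel-verified Lean document; each statement's English description precedes it below -/
import Mathlib

section
/- Let Z be a bounded random variable on a finite probability space with E(Z)=m, and let F_0 = {emptyset, Omega} ⊆ F_1 ⊆ ... ⊆ F_t be a filtration such that Z is F_t-measurable. Define Z_i = E(Z | F_i), and for each i let ran_i be the conditional range of Z_i given F_{i-1}, i.e. the F_{i-1}-measurable function whose value at ω is the maximum of |Z_i(ω_1) - Z_i(ω_2)| over ω_1, ω_2 in the atom of F_{i-1} containing ω. Let R_t^2 = Σ_{i=1}^t ran_i^2. Then for any a ≥ 0 and any value r² ≥ 0, P(|Z - m| ≥ a and R_t^2 ≤ r²) ≤ 2 exp(-2a²/r²). -/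
open MeasureTheory Real

/-- The atom of `ω` in the σ-field `G`: the set of points contained in every
`G`-measurable set containing `ω`. -/
def atomOf {Ω : Type*} (G : MeasurableSpace Ω) (ω : Ω) : Set Ω :=
  {ω' | ∀ A : Set Ω, MeasurableSet[G] A → ω ∈ A → ω' ∈ A}

/-- The conditional range of `Y` given `G`: the maximum of `|Y ω₁ - Y ω₂|` over
points `ω₁, ω₂` in the `G`-atom containing `ω`. -/
noncomputable def condRange {Ω : Type*} (G : MeasurableSpace Ω) (Y : Ω → ℝ) (ω : Ω) : ℝ :=
  sSup {r | ∃ ω₁ ∈ atomOf G ω, ∃ ω₂ ∈ atomOf G ω, r = |Y ω₁ - Y ω₂|}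

set_option linter.unusedSectionVars false

section Atoms
variable {Ω : Type*} [Fintype Ω] {G : MeasurableSpace Ω}

lemma mem_atomOf_self (ω : Ω) : ω ∈ atomOf G ω := fun _ _ h => h

lemma atomOf_subset {A : Set Ω} (hA : MeasurableSet[G] A) {ω : Ω} (hω : ω ∈ A) :
    atomOf G ω ⊆ A := fun _ h => h A hA hω

lemma measurableSet_atomOf (ω : Ω) : MeasurableSet[G] (atomOf G ω) := by
  have : atomOf G ω = ⋂₀ {A : Set Ω | MeasurableSet[G] A ∧ ω ∈ A} := by
    ext x
    simp only [atomOf, Set.mem_setOf_eq, Set.mem_sInter]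
    tauto
  rw [this]
  exact MeasurableSet.sInter (Set.to_countable _) (fun A hA => hA.1)

lemma mem_atomOf_symm {ω ω' : Ω} (h : ω' ∈ atomOf G ω) : ω ∈ atomOf G ω' := by
  intro A hA hω'
  by_contra hω
  exact h Aᶜ hA.compl hω hω'

lemma atomOf_eq_of_mem {ω ω' : Ω} (h : ω' ∈ atomOf G ω) : atomOf G ω' = atomOf G ω := by
  ext x
  constructor
  · intro hx A hA hωA; exact hx A hA (h A hA hωA)
  · intro hx A hA hω'A; exact hx A hA (mem_atomOf_symm h A hA hω'A)

lemma eqOn_atomOf {f : Ω → ℝ} (hf : Measurable[G] f) {ω ω' : Ω} (h : ω' ∈ atomOf G ω) :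
    f ω' = f ω :=
  h (f ⁻¹' {f ω}) (hf (measurableSet_singleton _)) rfl

/-- A function constant on atoms is `G`-measurable. -/
lemma measurable_of_const_on_atoms {f : Ω → ℝ}
    (hf : ∀ ω ω', ω' ∈ atomOf G ω → f ω' = f ω) : Measurable[G] f := by
  intro s _
  have : f ⁻¹' s = ⋃ ω ∈ f ⁻¹' s, atomOf G ω := by
    ext x
    constructor
    · intro hx; exact Set.mem_biUnion hx (mem_atomOf_self x)
    · rintro hx
      simp only [Set.mem_iUnion] at hx
      obtain ⟨ω, hω, hxω⟩ := hx
      simpa [Set.mem_preimage, hf ω x hxω] using hω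
  rw [this]
  exact MeasurableSet.biUnion (Set.to_countable _) (fun ω _ => measurableSet_atomOf ω)

lemma condRange_bddAbove (Y : Ω → ℝ) (ω : Ω) :
    BddAbove {r | ∃ ω₁ ∈ atomOf G ω, ∃ ω₂ ∈ atomOf G ω, r = |Y ω₁ - Y ω₂|} := by
  apply Set.Finite.bddAbove
  apply (Set.finite_range (fun p : Ω × Ω => |Y p.1 - Y p.2|)).subset
  rintro r ⟨ω₁, _, ω₂, _, rfl⟩
  exact ⟨(ω₁, ω₂), rfl⟩

lemma abs_sub_le_condRange {Y : Ω → ℝ} {ω ω₁ ω₂ : Ω} (h₁ : ω₁ ∈ atomOf G ω)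
    (h₂ : ω₂ ∈ atomOf G ω) : |Y ω₁ - Y ω₂| ≤ condRange G Y ω :=
  le_csSup (condRange_bddAbove Y ω) ⟨ω₁, h₁, ω₂, h₂, rfl⟩

lemma condRange_nonneg (Y : Ω → ℝ) (ω : Ω) : 0 ≤ condRange G Y ω := by
  have := abs_sub_le_condRange (G := G) (Y := Y) (mem_atomOf_self ω) (mem_atomOf_self ω)
  simpa using this

lemma measurable_condRange (Y : Ω → ℝ) : Measurable[G] (condRange G Y) := by
  apply measurable_of_const_on_atoms
  intro ω ω' h
  unfold condRange
  rw [atomOf_eq_of_mem h]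

end Atoms
lemma q_pos {p : ℝ} (hp0 : 0 ≤ p) (hp1 : p ≤ 1) (u : ℝ) : 0 < 1 - p + p * Real.exp u := by
  nlinarith [Real.exp_pos u, mul_nonneg hp0 (mul_self_nonneg (Real.exp u)),
    mul_nonneg (sub_nonneg.2 hp1) (Real.exp_pos u).le]

lemma hoeffding_scalar {p : ℝ} (hp0 : 0 ≤ p) (hp1 : p ≤ 1) (u : ℝ) :
    Real.log (1 - p + p * Real.exp u) ≤ p * u + u ^ 2 / 8 := by
  set g : ℝ → ℝ := fun u => p * u + u ^ 2 / 8 - Real.log (1 - p + p * Real.exp u) with hg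
  set g1 : ℝ → ℝ := fun u => p + u / 4 - p * Real.exp u / (1 - p + p * Real.exp u) with hg1
  have hq : ∀ u : ℝ, HasDerivAt (fun u => 1 - p + p * Real.exp u) (p * Real.exp u) u :=
    fun u => ((Real.hasDerivAt_exp u).const_mul p).const_add (1 - p)
  have hgd : ∀ u : ℝ, HasDerivAt g (g1 u) u := by
    intro u
    have hlog : HasDerivAt (fun u => Real.log (1 - p + p * Real.exp u))
        (p * Real.exp u / (1 - p + p * Real.exp u)) u := (hq u).log (q_pos hp0 hp1 u).ne'
    have hpoly : HasDerivAt (fun u => p * u + u ^ 2 / 8) (p + u / 4) u := by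
      have h1 : HasDerivAt (fun u : ℝ => p * u) p u := by
        simpa using (hasDerivAt_id u).const_mul p
      have h2 : HasDerivAt (fun u : ℝ => u ^ 2 / 8) (u / 4) u := by
        have := (hasDerivAt_pow 2 u).div_const 8
        refine this.congr_deriv ?_
        norm_num
        ring
      exact h1.add h2
    exact hpoly.sub hlog
  have hg1d : ∀ u : ℝ, HasDerivAt g1
      (1 / 4 - (p * Real.exp u * (1 - p + p * Real.exp u) -
        p * Real.exp u * (p * Real.exp u)) / (1 - p + p * Real.exp u) ^ 2) u := by
    intro u
    have hdiv : HasDerivAt (fun u => p * Real.exp u / (1 - p + p * Real.exp u))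
        ((p * Real.exp u * (1 - p + p * Real.exp u) -
          p * Real.exp u * (p * Real.exp u)) / (1 - p + p * Real.exp u) ^ 2) u :=
      ((Real.hasDerivAt_exp u).const_mul p).div (hq u) (q_pos hp0 hp1 u).ne'
    have hlin : HasDerivAt (fun u : ℝ => p + u / 4) (1 / 4) u := by
      simpa using ((hasDerivAt_id u).div_const 4).const_add p
    exact hlin.sub hdiv
  have hg1deriv_nonneg : ∀ u : ℝ, 0 ≤ 1 / 4 - (p * Real.exp u * (1 - p + p * Real.exp u) -
      p * Real.exp u * (p * Real.exp u)) / (1 - p + p * Real.exp u) ^ 2 := by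
    intro u
    set E := Real.exp u
    set q := 1 - p + p * E with hqdef
    have hq0 : 0 < q := q_pos hp0 hp1 u
    set s := p * E / q with hs
    have heq : (p * E * q - p * E * (p * E)) / q ^ 2 = s - s ^ 2 := by
      rw [hs]; field_simp
    rw [heq]
    nlinarith [sq_nonneg (s - 1 / 2)]
  have hg1mono : Monotone g1 := by
    apply monotone_of_deriv_nonneg
    · exact fun u => (hg1d u).differentiableAt
    · intro u
      rw [(hg1d u).deriv]
      exact hg1deriv_nonneg u
  have hg1zero : g1 0 = 0 := by
    simp [hg1, Real.exp_zero]
  have hgzero : g 0 = 0 := by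
    have : 1 - p + p * Real.exp 0 = 1 := by simp
    simp [hg, this]
  -- g u ≥ 0 for all u
  have hgnonneg : ∀ u : ℝ, 0 ≤ g u := by
    intro u
    rcases le_or_gt 0 u with hu | hu
    · have hmono : MonotoneOn g (Set.Ici (0 : ℝ)) := by
        apply monotoneOn_of_deriv_nonneg (convex_Ici 0)
        · exact (Differentiable.continuous (fun x => (hgd x).differentiableAt)).continuousOn
        · exact fun x _ => (hgd x).differentiableAt.differentiableWithinAt
        · intro x hx
          rw [(hgd x).deriv]
          rw [interior_Ici] at hx
          have := hg1mono (le_of_lt hx)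
          linarith [hg1zero ▸ this]
      have := hmono Set.self_mem_Ici (Set.mem_Ici.2 hu) hu
      linarith [hgzero ▸ this]
    · have hmono : AntitoneOn g (Set.Iic (0 : ℝ)) := by
        apply antitoneOn_of_deriv_nonpos (convex_Iic 0)
        · exact (Differentiable.continuous (fun x => (hgd x).differentiableAt)).continuousOn
        · exact fun x _ => (hgd x).differentiableAt.differentiableWithinAt
        · intro x hx
          rw [(hgd x).deriv]
          rw [interior_Iic] at hx
          have := hg1mono (le_of_lt hx)
          linarith [hg1zero ▸ this]
      have := hmono (Set.mem_Iic.2 hu.le) Set.self_mem_Iic hu.le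
      linarith [hgzero ▸ this]
  have := hgnonneg u
  simp only [hg] at this
  linarith

section C
variable {Ω : Type*} [Fintype Ω] [m0 : MeasurableSpace Ω] {μ : Measure Ω}

lemma integrable_fin [IsFiniteMeasure μ] {f : Ω → ℝ} (hf : Measurable f) : Integrable f μ := by
  classical
  have hbdd : ∀ x, ‖f x‖ ≤ ∑ ω : Ω, |f ω| := fun x => by
    rw [Real.norm_eq_abs]
    exact Finset.single_le_sum (f := fun ω => |f ω|) (fun ω _ => abs_nonneg _) (Finset.mem_univ x)
  exact (integrable_const (∑ ω : Ω, |f ω|)).mono' hf.aestronglyMeasurable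
    (Filter.Eventually.of_forall hbdd)

lemma exp_convex_bound {aℓ b x h : ℝ} (hab : aℓ < b) (hx1 : aℓ ≤ x) (hx2 : x ≤ b) :
    Real.exp (h * x) ≤ (b - x) / (b - aℓ) * Real.exp (h * aℓ) +
      (x - aℓ) / (b - aℓ) * Real.exp (h * b) := by
  have hba : 0 < b - aℓ := by linarith
  have w1 : (0:ℝ) ≤ (b - x) / (b - aℓ) := div_nonneg (by linarith) hba.le
  have w2 : (0:ℝ) ≤ (x - aℓ) / (b - aℓ) := div_nonneg (by linarith) hba.le
  have w3 : (b - x) / (b - aℓ) + (x - aℓ) / (b - aℓ) = 1 := by field_simp; ring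
  have key := convexOn_exp.2 (Set.mem_univ (h * aℓ)) (Set.mem_univ (h * b)) w1 w2 w3
  simp only [smul_eq_mul] at key
  have hcomb : (b - x) / (b - aℓ) * (h * aℓ) + (x - aℓ) / (b - aℓ) * (h * b) = h * x := by
    rw [div_mul_eq_mul_div, div_mul_eq_mul_div, ← add_div, div_eq_iff hba.ne']
    ring
  rw [hcomb] at key
  exact key

lemma hoeffding_atom [IsFiniteMeasure μ] {A : Set Ω} (hA : MeasurableSet A)
    {X : Ω → ℝ} (hX : Measurable X) {aℓ b : ℝ}
    (hbd : ∀ x ∈ A, aℓ ≤ X x ∧ X x ≤ b) (hmean : ∫ x in A, X x ∂μ = 0) (h : ℝ) :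
    ∫ x in A, Real.exp (h * X x) ∂μ ≤
      (μ A).toReal * Real.exp (h ^ 2 * (b - aℓ) ^ 2 / 8) := by
  have hXexp : Measurable fun x => Real.exp (h * X x) := (hX.const_mul h).exp
  by_cases hμA : μ A = 0
  · rw [Measure.restrict_eq_zero.2 hμA]
    simp [hμA]
  have hA0 : 0 < (μ A).toReal := ENNReal.toReal_pos hμA (measure_ne_top μ A)
  -- aℓ ≤ 0 ≤ b
  have hintX : IntegrableOn X A μ := (integrable_fin hX).integrableOn
  have hb0 : 0 ≤ b := by
    have : ∫ x in A, X x ∂μ ≤ ∫ _x in A, b ∂μ :=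
      setIntegral_mono_on hintX integrableOn_const hA
        (fun x hx => (hbd x hx).2)
    rw [hmean, setIntegral_const, smul_eq_mul, measureReal_def] at this
    nlinarith
  have ha0 : aℓ ≤ 0 := by
    have : ∫ _x in A, aℓ ∂μ ≤ ∫ x in A, X x ∂μ :=
      setIntegral_mono_on integrableOn_const hintX hA
        (fun x hx => (hbd x hx).1)
    rw [hmean, setIntegral_const, smul_eq_mul, measureReal_def] at this
    nlinarith
  rcases eq_or_lt_of_le (le_trans ha0 hb0) with heq | hab
  · -- aℓ = 0 = b, X = 0 on A
    have haz : aℓ = 0 := le_antisymm ha0 (heq ▸ hb0)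
    have hbz : b = 0 := heq ▸ haz
    have hXz : Set.EqOn (fun x => Real.exp (h * X x)) (fun _ => (1:ℝ)) A := by
      intro x hx
      have h1 := (hbd x hx).1
      have h2 := (hbd x hx).2
      have : X x = 0 := le_antisymm (hbz ▸ h2) (haz ▸ h1)
      simp [this]
    rw [setIntegral_congr_fun hA hXz, setIntegral_const, haz, hbz]
    simp [measureReal_def]
  · -- main case aℓ < b
    set p : ℝ := -aℓ / (b - aℓ) with hp
    set u : ℝ := h * (b - aℓ) with hu
    have hba : 0 < b - aℓ := by linarith
    have hp0 : 0 ≤ p := div_nonneg (by linarith) hba.le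
    have hp1 : p ≤ 1 := by rw [hp, div_le_one hba]; linarith
    set c1 : ℝ := (b * Real.exp (h * aℓ) - aℓ * Real.exp (h * b)) / (b - aℓ) with hc1
    set c2 : ℝ := (Real.exp (h * b) - Real.exp (h * aℓ)) / (b - aℓ) with hc2
    have step1 : ∫ x in A, Real.exp (h * X x) ∂μ ≤ ∫ x in A, (c1 + c2 * X x) ∂μ := by
      apply setIntegral_mono_on (integrable_fin hXexp).integrableOn
        ((integrable_const c1).add ((integrable_fin hX).const_mul c2)).integrableOn hA
      intro x hx
      show Real.exp (h * X x) ≤ c1 + c2 * X x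
      have hcb := exp_convex_bound (h := h) hab (hbd x hx).1 (hbd x hx).2
      have hrw : c1 + c2 * X x = (b - X x) / (b - aℓ) * Real.exp (h * aℓ) +
          (X x - aℓ) / (b - aℓ) * Real.exp (h * b) := by
        rw [hc1, hc2]
        field_simp
        ring
      linarith
    have step2 : ∫ x in A, (c1 + c2 * X x) ∂μ = c1 * (μ A).toReal := by
      rw [integral_add (integrableOn_const : IntegrableOn (fun _ : Ω => c1) A μ)
        (hintX.const_mul c2), integral_const_mul, hmean, setIntegral_const]
      simp [mul_comm, measureReal_def]
    have hc1bound : c1 ≤ Real.exp (h ^ 2 * (b - aℓ) ^ 2 / 8) := by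
      have key := hoeffding_scalar hp0 hp1 u
      have hqpos : 0 < 1 - p + p * Real.exp u := q_pos hp0 hp1 u
      have hle : 1 - p + p * Real.exp u ≤ Real.exp (p * u + u ^ 2 / 8) :=
        (Real.log_le_iff_le_exp hqpos).1 key
      have hid : c1 = Real.exp (-(p * u)) * (1 - p + p * Real.exp u) := by
        have hexpu : Real.exp u = Real.exp (h * b) / Real.exp (h * aℓ) := by
          rw [hu, mul_sub, Real.exp_sub]
        have hpu : -(p * u) = h * aℓ := by
          rw [hp, hu]; field_simp
        rw [hpu, hexpu, hc1, hp]
        field_simp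
        ring
      calc c1 = Real.exp (-(p * u)) * (1 - p + p * Real.exp u) := hid
        _ ≤ Real.exp (-(p * u)) * Real.exp (p * u + u ^ 2 / 8) :=
            mul_le_mul_of_nonneg_left hle (Real.exp_nonneg _)
        _ = Real.exp (u ^ 2 / 8) := by rw [← Real.exp_add]; ring_nf
        _ = Real.exp (h ^ 2 * (b - aℓ) ^ 2 / 8) := by rw [hu]; ring_nf
    calc ∫ x in A, Real.exp (h * X x) ∂μ ≤ c1 * (μ A).toReal := step1.trans_eq step2
      _ ≤ (μ A).toReal * Real.exp (h ^ 2 * (b - aℓ) ^ 2 / 8) := by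
          rw [mul_comm]
          exact mul_le_mul_of_nonneg_left hc1bound hA0.le

end C
section D
variable {Ω : Type*} [Fintype Ω] [m0 : MeasurableSpace Ω] {μ : Measure Ω}

open Classical in
noncomputable def atomsOf (G : MeasurableSpace Ω) : Finset (Set Ω) :=
  Finset.image (atomOf G) Finset.univ

lemma mem_atomsOf {G : MeasurableSpace Ω} (ω : Ω) : atomOf G ω ∈ atomsOf G := by
  classical
  exact Finset.mem_image.2 ⟨ω, Finset.mem_univ ω, rfl⟩

lemma integral_eq_sum_atoms [IsFiniteMeasure μ] {G : MeasurableSpace Ω} (hG : G ≤ m0)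
    {f : Ω → ℝ} (hf : Measurable[m0] f) :
    ∫ x, f x ∂μ = ∑ A ∈ atomsOf G, ∫ x in A, f x ∂μ := by
  classical
  letI : MeasurableSpace Ω := m0
  have hmeas : ∀ A ∈ atomsOf G, MeasurableSet[m0] A := by
    intro A hA
    obtain ⟨x, _, rfl⟩ := Finset.mem_image.1 hA
    exact hG _ (measurableSet_atomOf x)
  have hdisj : Set.Pairwise (↑(atomsOf G)) (Function.onFun Disjoint (id : Set Ω → Set Ω)) := by
    intro A hA B hB hAB
    simp only [Function.onFun, id]
    rw [Set.disjoint_left]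
    intro z hzA hzB
    obtain ⟨x, _, rfl⟩ := Finset.mem_image.1 (Finset.mem_coe.1 hA)
    obtain ⟨y, _, rfl⟩ := Finset.mem_image.1 (Finset.mem_coe.1 hB)
    exact hAB ((atomOf_eq_of_mem hzA).symm.trans (atomOf_eq_of_mem hzB))
  have hcover : (⋃ A ∈ atomsOf G, (id A : Set Ω)) = Set.univ := by
    ext ω
    simp only [Set.mem_iUnion, id, Set.mem_univ, iff_true]
    exact ⟨atomOf G ω, mem_atomsOf ω, mem_atomOf_self ω⟩
  have := integral_biUnion_finset (μ := μ) (f := f) (atomsOf G) (s := id) hmeas hdisj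
    (fun A _ => (integrable_fin hf).integrableOn)
  rw [hcover] at this
  simpa using this

lemma step_bound [IsFiniteMeasure μ] {G : MeasurableSpace Ω} (hG : G ≤ m0) {W Y Y' : Ω → ℝ}
    (hW : Measurable[G] W) (hWpos : ∀ ω, 0 ≤ W ω)
    (hY : Measurable[m0] Y) (hY' : Measurable[G] Y')
    (hmean : ∀ A : Set Ω, MeasurableSet[G] A → ∫ x in A, (Y x - Y' x) ∂μ = 0)
    (h : ℝ) :
    ∫ ω, W ω * Real.exp (h * (Y ω - Y' ω)) ∂μ ≤
      ∫ ω, W ω * Real.exp (h ^ 2 * (condRange G Y ω) ^ 2 / 8) ∂μ := by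
  classical
  letI : MeasurableSpace Ω := m0
  set ρ := condRange G Y with hρ
  have hρmeas : Measurable[G] ρ := measurable_condRange Y
  set X := fun ω => Y ω - Y' ω with hX
  have hXmeas : Measurable[m0] X := hY.sub (hY'.mono hG le_rfl)
  have hWm0 : Measurable[m0] W := hW.mono hG le_rfl
  have hL : Measurable[m0] fun ω => W ω * Real.exp (h * X ω) :=
    hWm0.mul ((hXmeas.const_mul h).exp)
  have hR : Measurable[m0] fun ω => W ω * Real.exp (h ^ 2 * ρ ω ^ 2 / 8) :=
    hWm0.mul ((((hρmeas.mono hG le_rfl).pow_const 2).const_mul (h ^ 2)).div_const 8).exp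
  rw [integral_eq_sum_atoms hG hL, integral_eq_sum_atoms hG hR]
  apply Finset.sum_le_sum
  intro A hA
  obtain ⟨ω₀, _, rfl⟩ := Finset.mem_image.1 hA
  set A := atomOf G ω₀
  have hAmeas : MeasurableSet[m0] A := hG _ (measurableSet_atomOf ω₀)
  have hAne : A.Nonempty := ⟨ω₀, mem_atomOf_self ω₀⟩
  have hXA : (X '' A).Finite := (A.toFinite).image X
  have hXAne : (X '' A).Nonempty := hAne.image X
  set aℓ := sInf (X '' A) with haℓ
  set b := sSup (X '' A) with hb
  have hbdd : ∀ x ∈ A, aℓ ≤ X x ∧ X x ≤ b := fun x hx =>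
    ⟨csInf_le hXA.bddBelow (Set.mem_image_of_mem X hx),
     le_csSup hXA.bddAbove (Set.mem_image_of_mem X hx)⟩
  -- b - aℓ ≤ ρ ω₀
  have hattain_b : b ∈ X '' A := hXAne.csSup_mem hXA
  have hattain_a : aℓ ∈ X '' A := hXAne.csInf_mem hXA
  obtain ⟨x₁, hx₁, hx₁b⟩ := hattain_b
  obtain ⟨x₂, hx₂, hx₂a⟩ := hattain_a
  have hY'const : Y' x₁ = Y' x₂ := by
    rw [eqOn_atomOf hY' hx₁, eqOn_atomOf hY' hx₂]
  have hosc : b - aℓ ≤ ρ ω₀ := by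
    have h1 : b - aℓ = Y x₁ - Y x₂ := by
      rw [← hx₁b, ← hx₂a, hX]
      simp only
      linarith
    rw [h1]
    exact (le_abs_self _).trans (abs_sub_le_condRange hx₁ hx₂)
  have hosc0 : 0 ≤ b - aℓ := by
    obtain ⟨x, hx⟩ := hAne
    linarith [(hbdd x hx).1, (hbdd x hx).2]
  -- integral over atom of LHS
  have hWc : ∀ x ∈ A, W x = W ω₀ := fun x hx => eqOn_atomOf hW hx
  have hρc : ∀ x ∈ A, ρ x = ρ ω₀ := fun x hx => eqOn_atomOf hρmeas hx
  have hLHS : ∫ x in A, W x * Real.exp (h * X x) ∂μ =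
      W ω₀ * ∫ x in A, Real.exp (h * X x) ∂μ := by
    rw [setIntegral_congr_fun hAmeas (g := fun x => W ω₀ * Real.exp (h * X x))
      (fun x hx => by rw [hWc x hx]), integral_const_mul]
  have hRHS : ∫ x in A, W x * Real.exp (h ^ 2 * ρ x ^ 2 / 8) ∂μ =
      W ω₀ * Real.exp (h ^ 2 * ρ ω₀ ^ 2 / 8) * (μ A).toReal := by
    rw [setIntegral_congr_fun hAmeas
      (g := fun _ => W ω₀ * Real.exp (h ^ 2 * ρ ω₀ ^ 2 / 8))
      (fun x hx => by rw [hWc x hx, hρc x hx]), setIntegral_const]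
    rw [smul_eq_mul, measureReal_def]
    ring
  have hhoef := hoeffding_atom hAmeas hXmeas hbdd (hmean A (measurableSet_atomOf ω₀)) h
  have hexpmono : Real.exp (h ^ 2 * (b - aℓ) ^ 2 / 8) ≤ Real.exp (h ^ 2 * ρ ω₀ ^ 2 / 8) := by
    apply Real.exp_le_exp.2
    have : (b - aℓ) ^ 2 ≤ ρ ω₀ ^ 2 := by nlinarith
    nlinarith [sq_nonneg h]
  calc ∫ x in A, W x * Real.exp (h * X x) ∂μ
      = W ω₀ * ∫ x in A, Real.exp (h * X x) ∂μ := hLHS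
    _ ≤ W ω₀ * ((μ A).toReal * Real.exp (h ^ 2 * (b - aℓ) ^ 2 / 8)) := by
        apply mul_le_mul_of_nonneg_left hhoef (hWpos ω₀)
    _ ≤ W ω₀ * ((μ A).toReal * Real.exp (h ^ 2 * ρ ω₀ ^ 2 / 8)) := by
        apply mul_le_mul_of_nonneg_left _ (hWpos ω₀)
        exact mul_le_mul_of_nonneg_left hexpmono ENNReal.toReal_nonneg
    _ = W ω₀ * Real.exp (h ^ 2 * ρ ω₀ ^ 2 / 8) * (μ A).toReal := by ring
    _ = ∫ x in A, W x * Real.exp (h ^ 2 * ρ x ^ 2 / 8) ∂μ := hRHS.symm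

end D
/-- Azuma–Hoeffding with sum of squared conditional ranges (McDiarmid, Thm 3.14). -/
theorem stmt0 {Ω : Type*} [Fintype Ω] [m0 : MeasurableSpace Ω]
    (μ : Measure Ω) [IsProbabilityMeasure μ] (t : ℕ)
    (𝒢 : ℕ → MeasurableSpace Ω) (hmono : Monotone 𝒢) (hle : ∀ i, 𝒢 i ≤ m0)
    (h0 : 𝒢 0 = ⊥) (Z : Ω → ℝ) (hZ : Measurable[𝒢 t] Z)
    (m : ℝ) (hm : m = ∫ ω, Z ω ∂μ) (a r2 : ℝ) (ha : 0 ≤ a) (hr2 : 0 ≤ r2) :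
    μ {ω | a ≤ |Z ω - m| ∧
        ∑ i ∈ Finset.Icc 1 t, (condRange (𝒢 (i - 1)) (μ[Z|𝒢 i]) ω) ^ 2 ≤ r2}
      ≤ ENNReal.ofReal (2 * Real.exp (-2 * a ^ 2 / r2)) := by
  classical
  rcases eq_or_lt_of_le hr2 with hr0 | hr2pos
  · rw [← hr0, div_zero, Real.exp_zero, mul_one]
    calc μ _ ≤ 1 := prob_le_one
      _ ≤ ENNReal.ofReal 2 := by norm_num [ENNReal.one_le_ofReal]
  have hZm0 : Measurable[m0] Z := hZ.mono (hle t) le_rfl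
  have hZint : Integrable Z μ := integrable_fin hZm0
  set M : ℕ → Ω → ℝ := fun i => μ[Z|𝒢 i] with hMdef
  set ran : ℕ → Ω → ℝ := fun i => condRange (𝒢 (i - 1)) (M i) with hrandef
  have hMt : M t = Z := condExp_of_stronglyMeasurable (hle t) hZ.stronglyMeasurable hZint
  have hM0 : M 0 = fun _ => m := by
    simp only [hMdef, h0, condExp_bot, ← hm]
  have hMmeasG : ∀ i, Measurable[𝒢 i] (M i) := fun i => stronglyMeasurable_condExp.measurable
  have hMmeas : ∀ i, Measurable[m0] (M i) := fun i => (hMmeasG i).mono (hle i) le_rfl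
  have hranG : ∀ i, Measurable[𝒢 (i - 1)] (ran i) := fun i => measurable_condRange _
  have hranmeas : ∀ i, Measurable[m0] (ran i) := fun i => (hranG i).mono (hle _) le_rfl
  set V : ℝ → ℕ → Ω → ℝ := fun h k ω =>
    Real.exp (h * (M k ω - m) - h ^ 2 / 8 * ∑ i ∈ Finset.Icc 1 k, ran i ω ^ 2) with hVdef
  have hVmeas : ∀ h k, Measurable[m0] (V h k) := by
    intro h k
    apply Measurable.exp
    apply Measurable.sub
    · exact ((hMmeas k).sub measurable_const).const_mul h
    · exact (Finset.measurable_sum _ (fun i _ => (hranmeas i).pow_const 2)).const_mul (h ^ 2 / 8)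
  have hVpos : ∀ h k ω, 0 < V h k ω := fun h k ω => Real.exp_pos _
  -- the supermartingale bound on the expectation
  have hsuper : ∀ h : ℝ, ∀ k : ℕ, ∫ ω, V h k ω ∂μ ≤ 1 := by
    intro h k
    induction k with
    | zero =>
      have hone : V h 0 = fun _ => 1 := by
        funext ω
        simp [hVdef, hM0, Finset.Icc_eq_empty (by omega : ¬(1:ℕ) ≤ 0)]
      rw [hone]
      simp
    | succ k ih =>
      set W : Ω → ℝ := fun ω =>
        Real.exp (h * (M k ω - m) - h ^ 2 / 8 * ∑ i ∈ Finset.Icc 1 (k + 1), ran i ω ^ 2)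
        with hWdef
      have hWmeasG : Measurable[𝒢 k] W := by
        apply Measurable.exp
        apply Measurable.sub
        · exact ((hMmeasG k).sub measurable_const).const_mul h
        · refine (Finset.measurable_sum _ (fun i hi => ?_)).const_mul (h ^ 2 / 8)
          have hik : i - 1 ≤ k := by
            have := (Finset.mem_Icc.1 hi).2
            omega
          exact (((hranG i).mono (hmono hik) le_rfl)).pow_const 2
      have hWpos : ∀ ω, 0 ≤ W ω := fun ω => (Real.exp_pos _).le
      have hmean : ∀ A : Set Ω, MeasurableSet[𝒢 k] A →
          ∫ x in A, (M (k + 1) x - M k x) ∂μ = 0 := by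
        intro A hAm
        rw [integral_sub ((integrable_fin (hMmeas (k + 1))).integrableOn)
          ((integrable_fin (hMmeas k)).integrableOn)]
        have h1 : ∫ x in A, M (k + 1) x ∂μ = ∫ x in A, Z x ∂μ :=
          setIntegral_condExp (hle (k + 1)) hZint (hmono (Nat.le_succ k) A hAm)
        have h2 : ∫ x in A, M k x ∂μ = ∫ x in A, Z x ∂μ :=
          setIntegral_condExp (hle k) hZint hAm
        rw [h1, h2, sub_self]
      have hstep := step_bound (μ := μ) (hle k) hWmeasG hWpos (hMmeas (k + 1)) (hMmeasG k)
        hmean h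
      have hsum : ∀ ω, ∑ i ∈ Finset.Icc 1 (k + 1), ran i ω ^ 2 =
          ∑ i ∈ Finset.Icc 1 k, ran i ω ^ 2 + ran (k + 1) ω ^ 2 :=
        fun ω => Finset.sum_Icc_succ_top (Nat.succ_le_succ (Nat.zero_le k)) _
      have hVeq : V h (k + 1) = fun ω => W ω * Real.exp (h * (M (k + 1) ω - M k ω)) := by
        funext ω
        simp only [hVdef, hWdef]
        rw [← Real.exp_add]
        congr 1
        ring
      have hreq : (fun ω => W ω *
          Real.exp (h ^ 2 * (condRange (𝒢 k) (M (k + 1)) ω) ^ 2 / 8)) = V h k := by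
        funext ω
        have hr : condRange (𝒢 k) (M (k + 1)) ω = ran (k + 1) ω := by
          simp [hrandef]
        simp only [hVdef, hWdef, hr]
        rw [← Real.exp_add]
        congr 1
        rw [hsum ω]
        ring
      calc ∫ ω, V h (k + 1) ω ∂μ
          = ∫ ω, W ω * Real.exp (h * (M (k + 1) ω - M k ω)) ∂μ := by rw [hVeq]
        _ ≤ ∫ ω, W ω * Real.exp (h ^ 2 * (condRange (𝒢 k) (M (k + 1)) ω) ^ 2 / 8) ∂μ := hstep
        _ = ∫ ω, V h k ω ∂μ := by rw [hreq]
        _ ≤ 1 := ih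
  -- Markov
  set c : ℝ := Real.exp (2 * a ^ 2 / r2) with hc
  have hcpos : 0 < c := Real.exp_pos _
  have tail : ∀ h' : ℝ, ∀ E : Set Ω, MeasurableSet[m0] E →
      (∀ ω ∈ E, c ≤ V h' t ω) → μ E ≤ ENNReal.ofReal (Real.exp (-(2 * a ^ 2 / r2))) := by
    intro h' E hE hbound
    have hVint : Integrable (V h' t) μ := integrable_fin (hVmeas h' t)
    have h1 : c * (μ E).toReal ≤ ∫ ω in E, V h' t ω ∂μ :=
      by have := setIntegral_ge_of_const_le hE (measure_ne_top μ E) hbound hVint.integrableOn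
         rw [smul_eq_mul, measureReal_def, mul_comm] at this; exact this
    have h2 : ∫ ω in E, V h' t ω ∂μ ≤ ∫ ω, V h' t ω ∂μ :=
      setIntegral_le_integral hVint (Filter.Eventually.of_forall (fun ω => (hVpos h' t ω).le))
    have hcx : c * (μ E).toReal ≤ 1 := h1.trans (h2.trans (hsuper h' t))
    have h3 : (μ E).toReal ≤ Real.exp (-(2 * a ^ 2 / r2)) := by
      rw [Real.exp_neg, ← hc]
      have hci : c * c⁻¹ = 1 := mul_inv_cancel₀ hcpos.ne'
      exact le_of_mul_le_mul_left (by linarith) hcpos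
    calc μ E = ENNReal.ofReal (μ E).toReal := (ENNReal.ofReal_toReal (measure_ne_top μ E)).symm
      _ ≤ _ := ENNReal.ofReal_le_ofReal h3
  -- the two tail events
  set S : Ω → ℝ := fun ω => ∑ i ∈ Finset.Icc 1 t, ran i ω ^ 2 with hSdef
  have hSmeas : Measurable[m0] S :=
    Finset.measurable_sum _ (fun i _ => (hranmeas i).pow_const 2)
  set Ep : Set Ω := {ω | a ≤ Z ω - m ∧ S ω ≤ r2} with hEp
  set Em : Set Ω := {ω | a ≤ m - Z ω ∧ S ω ≤ r2} with hEm
  have hEpm : MeasurableSet[m0] Ep :=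
    (measurableSet_le measurable_const (hZm0.sub measurable_const)).inter
      (measurableSet_le hSmeas measurable_const)
  have hEmm : MeasurableSet[m0] Em :=
    (measurableSet_le measurable_const ((measurable_const.sub hZm0))).inter
      (measurableSet_le hSmeas measurable_const)
  set h' : ℝ := 4 * a / r2 with hh'
  have hh'nn : 0 ≤ h' := by positivity
  have hconst : 2 * a ^ 2 / r2 ≤ h' * a - h' ^ 2 / 8 * r2 := by
    rw [hh']
    apply le_of_eq
    field_simp
    ring
  have hboundp : ∀ ω ∈ Ep, c ≤ V h' t ω := by
    intro ω hω
    obtain ⟨h1, h2⟩ := hω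
    simp only [hc, hVdef]
    apply Real.exp_le_exp.2
    have hMZ : M t ω = Z ω := by rw [hMt]
    have e1 : h' * a ≤ h' * (M t ω - m) := by
      rw [hMZ]; exact mul_le_mul_of_nonneg_left h1 hh'nn
    have e2 : h' ^ 2 / 8 * (∑ i ∈ Finset.Icc 1 t, ran i ω ^ 2) ≤ h' ^ 2 / 8 * r2 :=
      mul_le_mul_of_nonneg_left h2 (by positivity)
    linarith
  have hboundm : ∀ ω ∈ Em, c ≤ V (-h') t ω := by
    intro ω hω
    obtain ⟨h1, h2⟩ := hω
    simp only [hc, hVdef]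
    apply Real.exp_le_exp.2
    have hMZ : M t ω = Z ω := by rw [hMt]
    have e1 : h' * a ≤ (-h') * (M t ω - m) := by
      have e1' : (-h') * (M t ω - m) = h' * (m - M t ω) := by ring
      rw [e1', hMZ]
      exact mul_le_mul_of_nonneg_left h1 hh'nn
    have e2 : (-h') ^ 2 / 8 * (∑ i ∈ Finset.Icc 1 t, ran i ω ^ 2) ≤ (-h') ^ 2 / 8 * r2 :=
      mul_le_mul_of_nonneg_left h2 (by positivity)
    have e3 : (-h') ^ 2 = h' ^ 2 := by ring
    nlinarith
  have hincl : {ω | a ≤ |Z ω - m| ∧ S ω ≤ r2} ⊆ Ep ∪ Em := by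
    intro ω hω
    obtain ⟨h1, h2⟩ := hω
    rcases le_abs.1 h1 with h | h
    · exact Or.inl ⟨h, h2⟩
    · exact Or.inr ⟨by linarith, h2⟩
  have hfinal : Real.exp (-(2 * a ^ 2 / r2)) + Real.exp (-(2 * a ^ 2 / r2)) =
      2 * Real.exp (-2 * a ^ 2 / r2) := by
    rw [show -(2 * a ^ 2 / r2) = -2 * a ^ 2 / r2 by ring]
    ring
  calc μ {ω | a ≤ |Z ω - m| ∧
        ∑ i ∈ Finset.Icc 1 t, (condRange (𝒢 (i - 1)) (μ[Z|𝒢 i]) ω) ^ 2 ≤ r2}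
      = μ {ω | a ≤ |Z ω - m| ∧ S ω ≤ r2} := rfl
    _ ≤ μ (Ep ∪ Em) := measure_mono hincl
    _ ≤ μ Ep + μ Em := measure_union_le _ _
    _ ≤ ENNReal.ofReal (Real.exp (-(2 * a ^ 2 / r2))) +
        ENNReal.ofReal (Real.exp (-(2 * a ^ 2 / r2))) :=
        add_le_add (tail h' Ep hEpm hboundp) (tail (-h') Em hEmm hboundm)
    _ = ENNReal.ofReal (2 * Real.exp (-2 * a ^ 2 / r2)) := by
        rw [← ENNReal.ofReal_add (Real.exp_pos _).le (Real.exp_pos _).le, hfinal]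
end

section
/- Fix positive integers d and C and λ > 0. Define F : ℝ^{C+1} → ℝ^{C+1} by F_0(ξ) = -λξ(0) - λg_0(ξ) + ξ(1); for 0 < k < C, F_k(ξ) = λξ(k-1) - λξ(k) + λg_{k-1}(ξ) - λg_k(ξ) - kξ(k) + (k+1)ξ(k+1); F_C(ξ) = λξ(C-1) + λg_{C-1}(ξ) - Cξ(C), where the g_j are as in the routing model. Then F is Lipschitz with constant 8d²(λ+1)(C+1)² on Δ^{C+1}_≤ = {ξ ≥ 0 : Σ_k ξ(k) ≤ 1}, with respect to the ℓ∞ norm. -/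
/-- `psum ξ j = ξ(0) + ... + ξ(j-1)`, so that `ξ(≤ j) = psum ξ (j+1)`. -/
noncomputable def psum (ξ : ℕ → ℝ) (j : ℕ) : ℝ := ∑ k ∈ Finset.range j, ξ k

/-- The function `g_j` of the routing model (arrival rate of alternatively routed
calls onto links with load `j`), for `d` choices and capacity `C`. -/
noncomputable def gfun (d C : ℕ) (ξ : ℕ → ℝ) (j : ℕ) : ℝ :=
  2 * ξ C * ξ j * psum ξ (j + 1) *
      ∑ r ∈ Finset.range d,
        (1 - (psum ξ (j + 1)) ^ 2) ^ r * (1 - (psum ξ j) ^ 2) ^ (d - 1 - r)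
  + 2 * ξ C * ξ j *
      ∑ i ∈ Finset.Ico (j + 1) C, ξ i *
        ∑ r ∈ Finset.range d,
          (1 - (psum ξ (i + 1)) ^ 2) ^ r * (1 - (psum ξ i) ^ 2) ^ (d - 1 - r)


/-- The drift vector field `F` of the routing model. -/
noncomputable def Fvec (d C : ℕ) (lam : ℝ) (ξ : ℕ → ℝ) (k : ℕ) : ℝ :=
  if k = 0 then -lam * ξ 0 - lam * gfun d C ξ 0 + ξ 1
  else if k = C then lam * ξ (C - 1) + lam * gfun d C ξ (C - 1) - C * ξ C
  else lam * ξ (k - 1) - lam * ξ k + lam * gfun d C ξ (k - 1) - lam * gfun d C ξ k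
       - k * ξ k + (k + 1) * ξ (k + 1)


noncomputable def Saux (d : ℕ) (ξ : ℕ → ℝ) (j : ℕ) : ℝ :=
  ∑ r ∈ Finset.range d, (1 - (psum ξ (j + 1)) ^ 2) ^ r * (1 - (psum ξ j) ^ 2) ^ (d - 1 - r)

lemma abs_pow_sub_pow_le' (a b : ℝ) (ha : |a| ≤ 1) (hb : |b| ≤ 1) (n : ℕ) :
    |a ^ n - b ^ n| ≤ n * |a - b| := by
  induction n with
  | zero => simp
  | succ n ih =>
    have hpa : |a| ^ n ≤ 1 := by
      calc |a| ^ n ≤ 1 ^ n := pow_le_pow_left₀ (abs_nonneg a) ha n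
        _ = 1 := one_pow n
    have key : a ^ (n + 1) - b ^ (n + 1) = a ^ n * (a - b) + (a ^ n - b ^ n) * b := by ring
    have h1 : |a ^ n * (a - b)| ≤ |a - b| := by
      rw [abs_mul, abs_pow]
      nlinarith [abs_nonneg (a - b)]
    have h2 : |(a ^ n - b ^ n) * b| ≤ n * |a - b| := by
      rw [abs_mul]
      nlinarith [abs_nonneg (a ^ n - b ^ n), abs_nonneg b, abs_nonneg (a - b)]
    calc |a ^ (n + 1) - b ^ (n + 1)| = |a ^ n * (a - b) + (a ^ n - b ^ n) * b| := by rw [key]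
      _ ≤ |a ^ n * (a - b)| + |(a ^ n - b ^ n) * b| := abs_add_le _ _
      _ ≤ |a - b| + n * |a - b| := add_le_add h1 h2
      _ = (↑(n + 1)) * |a - b| := by push_cast; ring

lemma mul_diff_bound (a a' b b' A B : ℝ) (h1 : |a| ≤ A) (h2 : |b'| ≤ B) :
    |a * b - a' * b'| ≤ A * |b - b'| + B * |a - a'| := by
  have key : a * b - a' * b' = a * (b - b') + (a - a') * b' := by ring
  rw [key]
  calc |a * (b - b') + (a - a') * b'| ≤ |a * (b - b')| + |(a - a') * b'| := abs_add_le _ _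
    _ = |a| * |b - b'| + |a - a'| * |b'| := by rw [abs_mul, abs_mul]
    _ ≤ A * |b - b'| + B * |a - a'| := by
        have := abs_nonneg (b - b'); have := abs_nonneg (a - a')
        have := abs_nonneg a; have := abs_nonneg b'
        nlinarith

lemma psum_nonneg (C : ℕ) (ξ : ℕ → ℝ) (hξ0 : ∀ k ≤ C, 0 ≤ ξ k) (j : ℕ) (hj : j ≤ C + 1) :
    0 ≤ psum ξ j := by
  unfold psum
  apply Finset.sum_nonneg
  intro i hi
  have : i < j := Finset.mem_range.mp hi
  exact hξ0 i (by omega)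

lemma psum_le_one (C : ℕ) (ξ : ℕ → ℝ) (hξ0 : ∀ k ≤ C, 0 ≤ ξ k)
    (hξ1 : ∑ k ∈ Finset.range (C + 1), ξ k ≤ 1) (j : ℕ) (hj : j ≤ C + 1) :
    psum ξ j ≤ 1 := by
  unfold psum
  refine le_trans ?_ hξ1
  apply Finset.sum_le_sum_of_subset_of_nonneg (Finset.range_subset_range.mpr hj)
  intro i hi _
  have : i < C + 1 := Finset.mem_range.mp hi
  exact hξ0 i (by omega)

lemma coord_abs_le_one (C : ℕ) (ξ : ℕ → ℝ) (hξ0 : ∀ k ≤ C, 0 ≤ ξ k)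
    (hξ1 : ∑ k ∈ Finset.range (C + 1), ξ k ≤ 1) (k : ℕ) (hk : k ≤ C) :
    |ξ k| ≤ 1 := by
  rw [abs_of_nonneg (hξ0 k hk)]
  refine le_trans ?_ hξ1
  apply Finset.single_le_sum (f := ξ) (fun i hi => hξ0 i (by
    have : i < C + 1 := Finset.mem_range.mp hi; omega))
  exact Finset.mem_range.mpr (by omega)

lemma base_abs (C : ℕ) (ξ : ℕ → ℝ) (hξ0 : ∀ k ≤ C, 0 ≤ ξ k)
    (hξ1 : ∑ k ∈ Finset.range (C + 1), ξ k ≤ 1) (j : ℕ) (hj : j ≤ C + 1) :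
    |1 - psum ξ j ^ 2| ≤ 1 := by
  have h0 := psum_nonneg C ξ hξ0 j hj
  have h1 := psum_le_one C ξ hξ0 hξ1 j hj
  rw [abs_le]
  constructor <;> nlinarith

lemma Saux_abs (d C : ℕ) (ξ : ℕ → ℝ) (hξ0 : ∀ k ≤ C, 0 ≤ ξ k)
    (hξ1 : ∑ k ∈ Finset.range (C + 1), ξ k ≤ 1) (j : ℕ) (hj : j ≤ C) :
    |Saux d ξ j| ≤ d := by
  unfold Saux
  calc |∑ r ∈ Finset.range d, (1 - (psum ξ (j + 1)) ^ 2) ^ r * (1 - (psum ξ j) ^ 2) ^ (d - 1 - r)|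
      ≤ ∑ r ∈ Finset.range d, |(1 - (psum ξ (j + 1)) ^ 2) ^ r * (1 - (psum ξ j) ^ 2) ^ (d - 1 - r)| :=
        Finset.abs_sum_le_sum_abs _ _
    _ ≤ ∑ _r ∈ Finset.range d, (1 : ℝ) := by
        apply Finset.sum_le_sum
        intro r _
        rw [abs_mul, abs_pow, abs_pow]
        have b1 := base_abs C ξ hξ0 hξ1 (j + 1) (by omega)
        have b2 := base_abs C ξ hξ0 hξ1 j (by omega)
        have p1 : |1 - psum ξ (j + 1) ^ 2| ^ r ≤ 1 := by
          calc _ ≤ (1:ℝ) ^ r := pow_le_pow_left₀ (abs_nonneg _) b1 r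
            _ = 1 := one_pow r
        have p2 : |1 - psum ξ j ^ 2| ^ (d - 1 - r) ≤ 1 := by
          calc _ ≤ (1:ℝ) ^ (d - 1 - r) := pow_le_pow_left₀ (abs_nonneg _) b2 _
            _ = 1 := one_pow _
        nlinarith [abs_nonneg (1 - psum ξ (j+1) ^ 2), abs_nonneg (1 - psum ξ j ^ 2),
          pow_nonneg (abs_nonneg (1 - psum ξ (j+1) ^ 2)) r,
          pow_nonneg (abs_nonneg (1 - psum ξ j ^ 2)) (d - 1 - r)]
    _ = d := by simp

lemma psum_diff (C : ℕ) (ξ η : ℕ → ℝ) (M : ℝ) (hM0 : 0 ≤ M)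
    (hM : ∀ m ≤ C, |ξ m - η m| ≤ M) (j : ℕ) (hj : j ≤ C + 1) :
    |psum ξ j - psum η j| ≤ ((C : ℝ) + 1) * M := by
  unfold psum
  rw [← Finset.sum_sub_distrib]
  calc |∑ k ∈ Finset.range j, (ξ k - η k)| ≤ ∑ k ∈ Finset.range j, |ξ k - η k| :=
        Finset.abs_sum_le_sum_abs _ _
    _ ≤ ∑ _k ∈ Finset.range j, M := by
        apply Finset.sum_le_sum
        intro i hi
        exact hM i (by have := Finset.mem_range.mp hi; omega)
    _ = (j : ℝ) * M := by simp [mul_comm]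
    _ ≤ ((C : ℝ) + 1) * M := by
        apply mul_le_mul_of_nonneg_right _ hM0
        exact_mod_cast hj

lemma sq_diff_bound (C : ℕ) (ξ η : ℕ → ℝ)
    (hξ0 : ∀ k ≤ C, 0 ≤ ξ k) (hξ1 : ∑ k ∈ Finset.range (C + 1), ξ k ≤ 1)
    (hη0 : ∀ k ≤ C, 0 ≤ η k) (hη1 : ∑ k ∈ Finset.range (C + 1), η k ≤ 1)
    (M : ℝ) (hM0 : 0 ≤ M) (hM : ∀ m ≤ C, |ξ m - η m| ≤ M) (j : ℕ) (hj : j ≤ C + 1) :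
    |(1 - psum ξ j ^ 2) - (1 - psum η j ^ 2)| ≤ 2 * (((C : ℝ) + 1) * M) := by
  have key : (1 - psum ξ j ^ 2) - (1 - psum η j ^ 2)
      = -((psum ξ j + psum η j) * (psum ξ j - psum η j)) := by ring
  rw [key, abs_neg, abs_mul]
  have h1 : |psum ξ j + psum η j| ≤ 2 := by
    have := psum_nonneg C ξ hξ0 j hj
    have := psum_nonneg C η hη0 j hj
    have := psum_le_one C ξ hξ0 hξ1 j hj
    have := psum_le_one C η hη0 hη1 j hj
    rw [abs_le]; constructor <;> linarith
  have h2 := psum_diff C ξ η M hM0 hM j hj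
  nlinarith [abs_nonneg (psum ξ j - psum η j), abs_nonneg (psum ξ j + psum η j),
    mul_nonneg (mul_nonneg (by positivity : (0:ℝ) ≤ (C:ℝ)+1) hM0) (by norm_num : (0:ℝ) ≤ 1)]

lemma Saux_diff (d C : ℕ) (hd : 0 < d) (ξ η : ℕ → ℝ)
    (hξ0 : ∀ k ≤ C, 0 ≤ ξ k) (hξ1 : ∑ k ∈ Finset.range (C + 1), ξ k ≤ 1)
    (hη0 : ∀ k ≤ C, 0 ≤ η k) (hη1 : ∑ k ∈ Finset.range (C + 1), η k ≤ 1)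
    (M : ℝ) (hM0 : 0 ≤ M) (hM : ∀ m ≤ C, |ξ m - η m| ≤ M) (j : ℕ) (hj : j ≤ C) :
    |Saux d ξ j - Saux d η j| ≤ 2 * ((d : ℝ) - 1) * d * ((C : ℝ) + 1) * M := by
  have bx := base_abs C ξ hξ0 hξ1 (j + 1) (by omega)
  have by' := base_abs C ξ hξ0 hξ1 j (by omega)
  have bx' := base_abs C η hη0 hη1 (j + 1) (by omega)
  have by'' := base_abs C η hη0 hη1 j (by omega)
  have dx := sq_diff_bound C ξ η hξ0 hξ1 hη0 hη1 M hM0 hM (j + 1) (by omega)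
  have dy := sq_diff_bound C ξ η hξ0 hξ1 hη0 hη1 M hM0 hM j (by omega)
  set x : ℝ := 1 - psum ξ (j + 1) ^ 2 with hxdef
  set y : ℝ := 1 - psum ξ j ^ 2 with hydef
  set x' : ℝ := 1 - psum η (j + 1) ^ 2 with hx'def
  set y' : ℝ := 1 - psum η j ^ 2 with hy'def
  have hKM : (0 : ℝ) ≤ ((C : ℝ) + 1) * M := by positivity
  unfold Saux
  rw [← Finset.sum_sub_distrib]
  calc |∑ r ∈ Finset.range d, (x ^ r * y ^ (d - 1 - r) - x' ^ r * y' ^ (d - 1 - r))|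
      ≤ ∑ r ∈ Finset.range d, |x ^ r * y ^ (d - 1 - r) - x' ^ r * y' ^ (d - 1 - r)| :=
        Finset.abs_sum_le_sum_abs _ _
    _ ≤ ∑ _r ∈ Finset.range d, ((d : ℝ) - 1) * (2 * (((C : ℝ) + 1) * M)) := by
        apply Finset.sum_le_sum
        intro r hr
        have hrd : r < d := Finset.mem_range.mp hr
        have hx1 : |x ^ r| ≤ 1 := by
          rw [abs_pow]
          calc _ ≤ (1:ℝ) ^ r := pow_le_pow_left₀ (abs_nonneg _) bx r
            _ = 1 := one_pow r
        have hy1 : |y' ^ (d - 1 - r)| ≤ 1 := by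
          rw [abs_pow]
          calc _ ≤ (1:ℝ) ^ (d - 1 - r) := pow_le_pow_left₀ (abs_nonneg _) by'' _
            _ = 1 := one_pow _
        have step := mul_diff_bound (x ^ r) (x' ^ r) (y ^ (d - 1 - r)) (y' ^ (d - 1 - r)) 1 1 hx1 hy1
        have px := abs_pow_sub_pow_le' x x' bx bx' r
        have py := abs_pow_sub_pow_le' y y' by' by'' (d - 1 - r)
        have hx2 : |x ^ r - x' ^ r| ≤ (r : ℝ) * (2 * (((C : ℝ) + 1) * M)) := by
          refine px.trans ?_
          apply mul_le_mul_of_nonneg_left dx (by positivity)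
        have hy2 : |y ^ (d - 1 - r) - y' ^ (d - 1 - r)|
            ≤ ((d - 1 - r : ℕ) : ℝ) * (2 * (((C : ℝ) + 1) * M)) := by
          refine py.trans ?_
          apply mul_le_mul_of_nonneg_left dy (by positivity)
        have hcast : ((d - 1 - r : ℕ) : ℝ) + (r : ℝ) = (d : ℝ) - 1 := by
          have h1 : (d - 1 - r) + r = d - 1 := Nat.sub_add_cancel (by omega)
          have h2 : ((d - 1 - r : ℕ) : ℝ) + (r : ℝ) = ((d - 1 : ℕ) : ℝ) := by
            exact_mod_cast congrArg (Nat.cast : ℕ → ℝ) h1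
          rw [h2]
          have : ((d - 1 : ℕ) : ℝ) = (d : ℝ) - 1 := by
            have : (1 : ℕ) ≤ d := hd
            push_cast [Nat.cast_sub this]
            ring
          rw [this]
        calc |x ^ r * y ^ (d - 1 - r) - x' ^ r * y' ^ (d - 1 - r)|
            ≤ 1 * |y ^ (d - 1 - r) - y' ^ (d - 1 - r)| + 1 * |x ^ r - x' ^ r| := step
          _ ≤ 1 * (((d - 1 - r : ℕ) : ℝ) * (2 * (((C : ℝ) + 1) * M)))
              + 1 * ((r : ℝ) * (2 * (((C : ℝ) + 1) * M))) := by
              apply add_le_add <;> · rw [one_mul, one_mul] ; assumption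
          _ = (((d - 1 - r : ℕ) : ℝ) + (r : ℝ)) * (2 * (((C : ℝ) + 1) * M)) := by ring
          _ = ((d : ℝ) - 1) * (2 * (((C : ℝ) + 1) * M)) := by rw [hcast]
    _ = (d : ℝ) * (((d : ℝ) - 1) * (2 * (((C : ℝ) + 1) * M))) := by
        rw [Finset.sum_const, Finset.card_range]; simp [nsmul_eq_mul]
    _ = 2 * ((d : ℝ) - 1) * d * ((C : ℝ) + 1) * M := by ring

lemma T_abs (d C : ℕ) (ξ : ℕ → ℝ)
    (hξ0 : ∀ k ≤ C, 0 ≤ ξ k) (hξ1 : ∑ k ∈ Finset.range (C + 1), ξ k ≤ 1) (j : ℕ) :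
    |∑ i ∈ Finset.Ico (j + 1) C, ξ i * Saux d ξ i| ≤ d := by
  have hsum : ∑ i ∈ Finset.Ico (j + 1) C, ξ i ≤ 1 := by
    refine le_trans ?_ hξ1
    apply Finset.sum_le_sum_of_subset_of_nonneg
    · intro i hi
      have := Finset.mem_Ico.mp hi
      exact Finset.mem_range.mpr (by omega)
    · intro i hi _
      have : i < C + 1 := Finset.mem_range.mp hi
      exact hξ0 i (by omega)
  calc |∑ i ∈ Finset.Ico (j + 1) C, ξ i * Saux d ξ i|
      ≤ ∑ i ∈ Finset.Ico (j + 1) C, |ξ i * Saux d ξ i| := Finset.abs_sum_le_sum_abs _ _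
    _ ≤ ∑ i ∈ Finset.Ico (j + 1) C, ξ i * d := by
        apply Finset.sum_le_sum
        intro i hi
        have hiC : i ≤ C := by have := Finset.mem_Ico.mp hi; omega
        rw [abs_mul, abs_of_nonneg (hξ0 i hiC)]
        apply mul_le_mul_of_nonneg_left (Saux_abs d C ξ hξ0 hξ1 i hiC) (hξ0 i hiC)
    _ = (∑ i ∈ Finset.Ico (j + 1) C, ξ i) * d := by rw [← Finset.sum_mul]
    _ ≤ 1 * d := by
        apply mul_le_mul_of_nonneg_right hsum (by positivity)
    _ = d := one_mul _

lemma T_diff (d C : ℕ) (hd : 0 < d) (hC : 0 < C) (ξ η : ℕ → ℝ)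
    (hξ0 : ∀ k ≤ C, 0 ≤ ξ k) (hξ1 : ∑ k ∈ Finset.range (C + 1), ξ k ≤ 1)
    (hη0 : ∀ k ≤ C, 0 ≤ η k) (hη1 : ∑ k ∈ Finset.range (C + 1), η k ≤ 1)
    (M : ℝ) (hM0 : 0 ≤ M) (hM : ∀ m ≤ C, |ξ m - η m| ≤ M) (j : ℕ) :
    |(∑ i ∈ Finset.Ico (j + 1) C, ξ i * Saux d ξ i)
      - ∑ i ∈ Finset.Ico (j + 1) C, η i * Saux d η i|
      ≤ ((C : ℝ) - 1) * ((d : ℝ) * M) + 2 * ((d : ℝ) - 1) * d * ((C : ℝ) + 1) * M := by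
  have hsumξ : ∑ i ∈ Finset.Ico (j + 1) C, ξ i ≤ 1 := by
    refine le_trans ?_ hξ1
    apply Finset.sum_le_sum_of_subset_of_nonneg
    · intro i hi
      have := Finset.mem_Ico.mp hi
      exact Finset.mem_range.mpr (by omega)
    · intro i hi _
      have : i < C + 1 := Finset.mem_range.mp hi
      exact hξ0 i (by omega)
  set D : ℝ := 2 * ((d : ℝ) - 1) * d * ((C : ℝ) + 1) * M with hD
  have hD0 : 0 ≤ D := by
    rw [hD]
    have : (1 : ℝ) ≤ (d : ℝ) := by exact_mod_cast hd
    have : (0 : ℝ) ≤ (d : ℝ) - 1 := by linarith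
    positivity
  rw [← Finset.sum_sub_distrib]
  calc |∑ i ∈ Finset.Ico (j + 1) C, (ξ i * Saux d ξ i - η i * Saux d η i)|
      ≤ ∑ i ∈ Finset.Ico (j + 1) C, |ξ i * Saux d ξ i - η i * Saux d η i| :=
        Finset.abs_sum_le_sum_abs _ _
    _ ≤ ∑ i ∈ Finset.Ico (j + 1) C, (ξ i * D + (d : ℝ) * M) := by
        apply Finset.sum_le_sum
        intro i hi
        have hiC : i ≤ C := by have := Finset.mem_Ico.mp hi; omega
        have step := mul_diff_bound (ξ i) (η i) (Saux d ξ i) (Saux d η i) (ξ i) (d : ℝ)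
          (le_of_eq (abs_of_nonneg (hξ0 i hiC)))
          (Saux_abs d C η hη0 hη1 i hiC)
        refine step.trans ?_
        apply add_le_add
        · exact mul_le_mul_of_nonneg_left
            (Saux_diff d C hd ξ η hξ0 hξ1 hη0 hη1 M hM0 hM i hiC) (hξ0 i hiC)
        · exact mul_le_mul_of_nonneg_left (hM i hiC) (by positivity)
    _ = (∑ i ∈ Finset.Ico (j + 1) C, ξ i) * D
        + (Finset.Ico (j + 1) C).card * ((d : ℝ) * M) := by
        rw [Finset.sum_add_distrib, ← Finset.sum_mul, Finset.sum_const, nsmul_eq_mul]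
    _ ≤ 1 * D + ((C : ℝ) - 1) * ((d : ℝ) * M) := by
        apply add_le_add
        · exact mul_le_mul_of_nonneg_right hsumξ hD0
        · apply mul_le_mul_of_nonneg_right _ (by positivity)
          rw [Nat.card_Ico]
          have h1 : C - (j + 1) ≤ C - 1 := by omega
          have h2 : ((C - (j + 1) : ℕ) : ℝ) ≤ ((C - 1 : ℕ) : ℝ) := by exact_mod_cast h1
          refine h2.trans ?_
          have : (1 : ℕ) ≤ C := hC
          rw [Nat.cast_sub this]
          simp
    _ = ((C : ℝ) - 1) * ((d : ℝ) * M) + D := by ring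
lemma gfun_eq (d C : ℕ) (ξ : ℕ → ℝ) (j : ℕ) :
    gfun d C ξ j = 2 * ξ C * ξ j * psum ξ (j + 1) * Saux d ξ j
      + 2 * ξ C * ξ j * ∑ i ∈ Finset.Ico (j + 1) C, ξ i * Saux d ξ i := rfl

lemma g_diff (d C : ℕ) (hd : 0 < d) (hC : 0 < C) (ξ η : ℕ → ℝ)
    (hξ0 : ∀ k ≤ C, 0 ≤ ξ k) (hξ1 : ∑ k ∈ Finset.range (C + 1), ξ k ≤ 1)
    (hη0 : ∀ k ≤ C, 0 ≤ η k) (hη1 : ∑ k ∈ Finset.range (C + 1), η k ≤ 1)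
    (M : ℝ) (hM0 : 0 ≤ M) (hM : ∀ m ≤ C, |ξ m - η m| ≤ M)
    (j : ℕ) (hj : j + 1 ≤ C) :
    |gfun d C ξ j - gfun d C η j| ≤ (8 * (d : ℝ) ^ 2 - 2 * d) * ((C : ℝ) + 1) * M := by
  have hd0 : (0 : ℝ) ≤ d := by positivity
  have hd1 : (1 : ℝ) ≤ (d : ℝ) := by exact_mod_cast hd
  have hC1 : (1 : ℝ) ≤ (C : ℝ) := by exact_mod_cast hC
  have hjC : j ≤ C := by omega
  set K : ℝ := (C : ℝ) + 1 with hK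
  set D : ℝ := 2 * ((d : ℝ) - 1) * d * K * M with hDdef
  set E : ℝ := ((C : ℝ) - 1) * ((d : ℝ) * M) + D with hEdef
  have hD0 : 0 ≤ D := by
    rw [hDdef]
    have : (0 : ℝ) ≤ (d : ℝ) - 1 := by linarith
    have : (0 : ℝ) ≤ K := by rw [hK]; linarith
    positivity
  -- coordinate bounds
  have ha : |ξ C| ≤ 1 := coord_abs_le_one C ξ hξ0 hξ1 C le_rfl
  have hb : |ξ j| ≤ 1 := coord_abs_le_one C ξ hξ0 hξ1 j hjC
  have ha' : |η C| ≤ 1 := coord_abs_le_one C η hη0 hη1 C le_rfl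
  have hb' : |η j| ≤ 1 := coord_abs_le_one C η hη0 hη1 j hjC
  have hp : |psum ξ (j + 1)| ≤ 1 := by
    rw [abs_of_nonneg (psum_nonneg C ξ hξ0 (j + 1) (by omega))]
    exact psum_le_one C ξ hξ0 hξ1 (j + 1) (by omega)
  have hp' : |psum η (j + 1)| ≤ 1 := by
    rw [abs_of_nonneg (psum_nonneg C η hη0 (j + 1) (by omega))]
    exact psum_le_one C η hη0 hη1 (j + 1) (by omega)
  have hs' : |Saux d η j| ≤ d := Saux_abs d C η hη0 hη1 j hjC
  have ht' : |∑ i ∈ Finset.Ico (j + 1) C, η i * Saux d η i| ≤ d := T_abs d C η hη0 hη1 j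
  -- difference bounds
  have da : |ξ C - η C| ≤ M := hM C le_rfl
  have db : |ξ j - η j| ≤ M := hM j hjC
  have dp : |psum ξ (j + 1) - psum η (j + 1)| ≤ K * M :=
    psum_diff C ξ η M hM0 hM (j + 1) (by omega)
  have ds : |Saux d ξ j - Saux d η j| ≤ D :=
    Saux_diff d C hd ξ η hξ0 hξ1 hη0 hη1 M hM0 hM j hjC
  have dt : |(∑ i ∈ Finset.Ico (j + 1) C, ξ i * Saux d ξ i)
      - ∑ i ∈ Finset.Ico (j + 1) C, η i * Saux d η i| ≤ E :=
    T_diff d C hd hC ξ η hξ0 hξ1 hη0 hη1 M hM0 hM j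
  -- product bounds
  have hab : |ξ C * ξ j| ≤ 1 := by
    rw [abs_mul]
    nlinarith [abs_nonneg (ξ C), abs_nonneg (ξ j)]
  have habp : |ξ C * ξ j * psum ξ (j + 1)| ≤ 1 := by
    rw [abs_mul]
    nlinarith [abs_nonneg (ξ C * ξ j), abs_nonneg (psum ξ (j + 1))]
  have H3 : |ξ C * ξ j - η C * η j| ≤ 2 * M := by
    have := mul_diff_bound (ξ C) (η C) (ξ j) (η j) 1 1 ha hb'
    linarith
  have H2 : |ξ C * ξ j * psum ξ (j + 1) - η C * η j * psum η (j + 1)| ≤ K * M + 2 * M := by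
    have := mul_diff_bound (ξ C * ξ j) (η C * η j) (psum ξ (j + 1)) (psum η (j + 1)) 1 1 hab hp'
    linarith
  have H1 : |ξ C * ξ j * psum ξ (j + 1) * Saux d ξ j
      - η C * η j * psum η (j + 1) * Saux d η j| ≤ D + (d : ℝ) * (K * M + 2 * M) := by
    have step := mul_diff_bound (ξ C * ξ j * psum ξ (j + 1)) (η C * η j * psum η (j + 1))
      (Saux d ξ j) (Saux d η j) 1 (d : ℝ) habp hs'
    have := mul_le_mul_of_nonneg_left H2 hd0
    linarith
  have H1' : |ξ C * ξ j * (∑ i ∈ Finset.Ico (j + 1) C, ξ i * Saux d ξ i)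
      - η C * η j * ∑ i ∈ Finset.Ico (j + 1) C, η i * Saux d η i|
      ≤ E + (d : ℝ) * (2 * M) := by
    have step := mul_diff_bound (ξ C * ξ j) (η C * η j)
      (∑ i ∈ Finset.Ico (j + 1) C, ξ i * Saux d ξ i)
      (∑ i ∈ Finset.Ico (j + 1) C, η i * Saux d η i) 1 (d : ℝ) hab ht'
    have := mul_le_mul_of_nonneg_left H3 hd0
    linarith
  rw [gfun_eq, gfun_eq]
  have rearr : 2 * ξ C * ξ j * psum ξ (j + 1) * Saux d ξ j
      + 2 * ξ C * ξ j * (∑ i ∈ Finset.Ico (j + 1) C, ξ i * Saux d ξ i)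
      - (2 * η C * η j * psum η (j + 1) * Saux d η j
        + 2 * η C * η j * ∑ i ∈ Finset.Ico (j + 1) C, η i * Saux d η i)
      = 2 * (ξ C * ξ j * psum ξ (j + 1) * Saux d ξ j
          - η C * η j * psum η (j + 1) * Saux d η j)
        + 2 * (ξ C * ξ j * (∑ i ∈ Finset.Ico (j + 1) C, ξ i * Saux d ξ i)
          - η C * η j * ∑ i ∈ Finset.Ico (j + 1) C, η i * Saux d η i) := by ring
  rw [rearr]
  have tri : |2 * (ξ C * ξ j * psum ξ (j + 1) * Saux d ξ j
          - η C * η j * psum η (j + 1) * Saux d η j)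
        + 2 * (ξ C * ξ j * (∑ i ∈ Finset.Ico (j + 1) C, ξ i * Saux d ξ i)
          - η C * η j * ∑ i ∈ Finset.Ico (j + 1) C, η i * Saux d η i)|
      ≤ 2 * |ξ C * ξ j * psum ξ (j + 1) * Saux d ξ j
          - η C * η j * psum η (j + 1) * Saux d η j|
        + 2 * |ξ C * ξ j * (∑ i ∈ Finset.Ico (j + 1) C, ξ i * Saux d ξ i)
          - η C * η j * ∑ i ∈ Finset.Ico (j + 1) C, η i * Saux d η i| := by
    refine (abs_add_le _ _).trans ?_
    rw [abs_mul, abs_mul]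
    norm_num
  refine tri.trans ?_
  have slack : 0 ≤ 2 * (d : ℝ) * M * ((C : ℝ) - 1) := by
    have : (0 : ℝ) ≤ (C : ℝ) - 1 := by linarith
    positivity
  have expand : (8 * (d : ℝ) ^ 2 - 2 * d) * K * M
      - (2 * (D + (d : ℝ) * (K * M + 2 * M)) + 2 * (E + (d : ℝ) * (2 * M)))
      = 2 * (d : ℝ) * M * ((C : ℝ) - 1) := by
    rw [hEdef, hDdef, hK]; ring
  linarith [H1, H1', slack, expand]

lemma abs_add6 (a b c e f g : ℝ) : |a + b + c + e + f + g| ≤ |a| + |b| + |c| + |e| + |f| + |g| := by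
  calc |a + b + c + e + f + g| ≤ |a + b + c + e + f| + |g| := abs_add_le _ _
    _ ≤ (|a + b + c + e| + |f|) + |g| := by linarith [abs_add_le (a + b + c + e) f]
    _ ≤ ((|a + b + c| + |e|) + |f|) + |g| := by linarith [abs_add_le (a + b + c) e]
    _ ≤ (((|a| + |b| + |c|) + |e|) + |f|) + |g| := by linarith [abs_add_three a b c]
    _ = |a| + |b| + |c| + |e| + |f| + |g| := by ring

lemma master (d C : ℕ) (hd : 0 < d) (hC : 0 < C) (lam M : ℝ) (hlam : 0 < lam) (hM0 : 0 ≤ M) :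
    2 * lam * M + 2 * lam * ((8 * (d : ℝ) ^ 2 - 2 * d) * ((C : ℝ) + 1) * M)
      + 2 * (C : ℝ) * M
      ≤ 8 * (d : ℝ) ^ 2 * (lam + 1) * ((C : ℝ) + 1) ^ 2 * M := by
  have hd1 : (1 : ℝ) ≤ (d : ℝ) := by exact_mod_cast hd
  have hK2 : (2 : ℝ) ≤ (C : ℝ) + 1 := by
    have : (1 : ℝ) ≤ (C : ℝ) := by exact_mod_cast hC
    linarith
  set K : ℝ := (C : ℝ) + 1 with hK
  have hK0 : (0 : ℝ) ≤ K := by linarith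
  have key : 2 * lam + 2 * lam * ((8 * (d : ℝ) ^ 2 - 2 * d) * K) + 2 * (C : ℝ)
      ≤ 8 * (d : ℝ) ^ 2 * (lam + 1) * K ^ 2 := by
    have hCK : (C : ℝ) = K - 1 := by rw [hK]; ring
    rw [hCK]
    nlinarith [mul_nonneg hlam.le (mul_nonneg (mul_nonneg (sq_nonneg (d : ℝ)) hK0)
        (by linarith : (0 : ℝ) ≤ K - 2)),
      mul_nonneg hlam.le (mul_nonneg (by linarith : (0 : ℝ) ≤ (d : ℝ) - 1) hK0),
      mul_nonneg (by nlinarith : (0 : ℝ) ≤ (d : ℝ) ^ 2 - 1) (sq_nonneg K),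
      mul_nonneg hK0 (by linarith : (0 : ℝ) ≤ K - 2),
      mul_nonneg hlam.le (by linarith : (0 : ℝ) ≤ K - 2)]
  have := mul_le_mul_of_nonneg_right key hM0
  linarith [this, (by ring : (2 * lam + 2 * lam * ((8 * (d : ℝ) ^ 2 - 2 * d) * K) + 2 * (C : ℝ)) * M
      = 2 * lam * M + 2 * lam * ((8 * (d : ℝ) ^ 2 - 2 * d) * K * M) + 2 * (C : ℝ) * M),
    (by ring : 8 * (d : ℝ) ^ 2 * (lam + 1) * K ^ 2 * M
      = (8 * (d : ℝ) ^ 2 * (lam + 1) * K ^ 2) * M)]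

set_option maxHeartbeats 1000000 in
/-- `F` is Lipschitz with constant `8 d² (λ+1) (C+1)²` on the set of nonnegative
vectors with coordinate sum at most 1, with respect to the ℓ∞ norm. -/
theorem stmt7 (d C : ℕ) (hd : 0 < d) (hC : 0 < C) (lam : ℝ) (hlam : 0 < lam)
    (ξ η : ℕ → ℝ)
    (hξ0 : ∀ k ≤ C, 0 ≤ ξ k) (hξ1 : ∑ k ∈ Finset.range (C + 1), ξ k ≤ 1)
    (hη0 : ∀ k ≤ C, 0 ≤ η k) (hη1 : ∑ k ∈ Finset.range (C + 1), η k ≤ 1)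
    (k : ℕ) (hk : k ≤ C) :
    |Fvec d C lam ξ k - Fvec d C lam η k|
      ≤ 8 * (d : ℝ) ^ 2 * (lam + 1) * ((C : ℝ) + 1) ^ 2 *
          (Finset.range (C + 1)).sup'
            (Finset.nonempty_range_iff.mpr (Nat.succ_ne_zero C))
            (fun m => |ξ m - η m|) := by
  have hM : ∀ m ≤ C, |ξ m - η m|
      ≤ (Finset.range (C + 1)).sup'
          (Finset.nonempty_range_iff.mpr (Nat.succ_ne_zero C))
          (fun m => |ξ m - η m|) := by
    intro m hm
    exact Finset.le_sup' (fun m => |ξ m - η m|) (Finset.mem_range.mpr (by omega))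
  obtain ⟨M, hMdef⟩ : ∃ M : ℝ, M = (Finset.range (C + 1)).sup'
      (Finset.nonempty_range_iff.mpr (Nat.succ_ne_zero C))
      (fun m => |ξ m - η m|) := ⟨_, rfl⟩
  rw [← hMdef] at hM ⊢
  have hM0 : 0 ≤ M := le_trans (abs_nonneg _) (hM 0 (by omega))
  obtain ⟨G, hGdef⟩ : ∃ G : ℝ, G = (8 * (d : ℝ) ^ 2 - 2 * d) * ((C : ℝ) + 1) * M := ⟨_, rfl⟩
  have hG0 : 0 ≤ G := by
    rw [hGdef]
    have hd1 : (1 : ℝ) ≤ (d : ℝ) := by exact_mod_cast hd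
    have h1 : (0 : ℝ) ≤ 8 * (d : ℝ) ^ 2 - 2 * d := by nlinarith
    positivity
  have hmaster := master d C hd hC lam M hlam hM0
  rw [← hGdef] at hmaster
  have hC1 : (1 : ℝ) ≤ (C : ℝ) := by exact_mod_cast hC
  have hlamM : 0 ≤ lam * M := mul_nonneg hlam.le hM0
  have hlamG : 0 ≤ lam * G := mul_nonneg hlam.le hG0
  have hCM : 0 ≤ (C : ℝ) * M := by positivity
  have hMC : M ≤ (C : ℝ) * M := by
    have := mul_le_mul_of_nonneg_right hC1 hM0
    linarith
  by_cases hk0 : k = 0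
  · subst hk0
    have key : Fvec d C lam ξ 0 - Fvec d C lam η 0
        = -(lam * (ξ 0 - η 0)) + -(lam * (gfun d C ξ 0 - gfun d C η 0)) + (ξ 1 - η 1) := by
      simp only [Fvec, if_true, eq_self_iff_true]
      ring
    rw [key]
    have hg := g_diff d C hd hC ξ η hξ0 hξ1 hη0 hη1 M hM0 hM 0 (by omega)
    rw [← hGdef] at hg
    have h0 := hM 0 (by omega)
    have h1 := hM 1 (by omega)
    calc |-(lam * (ξ 0 - η 0)) + -(lam * (gfun d C ξ 0 - gfun d C η 0)) + (ξ 1 - η 1)|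
        ≤ |-(lam * (ξ 0 - η 0))| + |-(lam * (gfun d C ξ 0 - gfun d C η 0))| + |ξ 1 - η 1| :=
          abs_add_three _ _ _
      _ = lam * |ξ 0 - η 0| + lam * |gfun d C ξ 0 - gfun d C η 0| + |ξ 1 - η 1| := by
          rw [abs_neg, abs_neg, abs_mul, abs_mul, abs_of_pos hlam]
      _ ≤ lam * M + lam * G + M := by
          have t1 := mul_le_mul_of_nonneg_left h0 hlam.le
          have t2 := mul_le_mul_of_nonneg_left hg hlam.le
          linarith
      _ ≤ 8 * (d : ℝ) ^ 2 * (lam + 1) * ((C : ℝ) + 1) ^ 2 * M := by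
          linarith
  · by_cases hkC : k = C
    · have key : Fvec d C lam ξ k - Fvec d C lam η k
          = lam * (ξ (C - 1) - η (C - 1))
            + lam * (gfun d C ξ (C - 1) - gfun d C η (C - 1))
            + -((C : ℝ) * (ξ C - η C)) := by
        simp only [Fvec, if_neg hk0, if_pos hkC]
        ring
      rw [key]
      have hg := g_diff d C hd hC ξ η hξ0 hξ1 hη0 hη1 M hM0 hM (C - 1) (by omega)
      rw [← hGdef] at hg
      have h0 := hM (C - 1) (by omega)
      have h1 := hM C le_rfl
      calc |lam * (ξ (C - 1) - η (C - 1))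
            + lam * (gfun d C ξ (C - 1) - gfun d C η (C - 1))
            + -((C : ℝ) * (ξ C - η C))|
          ≤ |lam * (ξ (C - 1) - η (C - 1))|
            + |lam * (gfun d C ξ (C - 1) - gfun d C η (C - 1))|
            + |-((C : ℝ) * (ξ C - η C))| := abs_add_three _ _ _
        _ = lam * |ξ (C - 1) - η (C - 1)|
            + lam * |gfun d C ξ (C - 1) - gfun d C η (C - 1)|
            + (C : ℝ) * |ξ C - η C| := by
            rw [abs_neg, abs_mul, abs_mul, abs_mul, abs_of_pos hlam,
              abs_of_nonneg (by positivity : (0:ℝ) ≤ (C:ℝ))]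
        _ ≤ lam * M + lam * G + (C : ℝ) * M := by
            have t1 := mul_le_mul_of_nonneg_left h0 hlam.le
            have t2 := mul_le_mul_of_nonneg_left hg hlam.le
            have t3 := mul_le_mul_of_nonneg_left h1 (by positivity : (0:ℝ) ≤ (C:ℝ))
            linarith
        _ ≤ 8 * (d : ℝ) ^ 2 * (lam + 1) * ((C : ℝ) + 1) ^ 2 * M := by
            linarith
    · have hk1 : 1 ≤ k := by omega
      have hkltC : k < C := by omega
      have key : Fvec d C lam ξ k - Fvec d C lam η k
          = lam * (ξ (k - 1) - η (k - 1)) + -(lam * (ξ k - η k))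
            + lam * (gfun d C ξ (k - 1) - gfun d C η (k - 1))
            + -(lam * (gfun d C ξ k - gfun d C η k))
            + -((k : ℝ) * (ξ k - η k)) + ((k : ℝ) + 1) * (ξ (k + 1) - η (k + 1)) := by
        simp only [Fvec, if_neg hk0, if_neg hkC]
        push_cast
        ring
      rw [key]
      have hg1 := g_diff d C hd hC ξ η hξ0 hξ1 hη0 hη1 M hM0 hM (k - 1)
        (by omega)
      have hg2 := g_diff d C hd hC ξ η hξ0 hξ1 hη0 hη1 M hM0 hM k (by omega)
      rw [← hGdef] at hg1 hg2
      have h0 := hM (k - 1) (by omega)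
      have h1 := hM k (by omega)
      have h2 := hM (k + 1) (by omega)
      have hkR : (k : ℝ) ≤ (C : ℝ) - 1 := by
        have : (k : ℝ) + 1 ≤ (C : ℝ) := by exact_mod_cast hkltC
        linarith
      have hk0R : (0 : ℝ) ≤ (k : ℝ) := by positivity
      calc |lam * (ξ (k - 1) - η (k - 1)) + -(lam * (ξ k - η k))
            + lam * (gfun d C ξ (k - 1) - gfun d C η (k - 1))
            + -(lam * (gfun d C ξ k - gfun d C η k))
            + -((k : ℝ) * (ξ k - η k)) + ((k : ℝ) + 1) * (ξ (k + 1) - η (k + 1))|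
          ≤ |lam * (ξ (k - 1) - η (k - 1))| + |-(lam * (ξ k - η k))|
            + |lam * (gfun d C ξ (k - 1) - gfun d C η (k - 1))|
            + |-(lam * (gfun d C ξ k - gfun d C η k))|
            + |-((k : ℝ) * (ξ k - η k))| + |((k : ℝ) + 1) * (ξ (k + 1) - η (k + 1))| :=
            abs_add6 _ _ _ _ _ _
        _ = lam * |ξ (k - 1) - η (k - 1)| + lam * |ξ k - η k|
            + lam * |gfun d C ξ (k - 1) - gfun d C η (k - 1)|
            + lam * |gfun d C ξ k - gfun d C η k|
            + (k : ℝ) * |ξ k - η k| + ((k : ℝ) + 1) * |ξ (k + 1) - η (k + 1)| := by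
            rw [abs_neg, abs_neg, abs_neg, abs_mul, abs_mul, abs_mul, abs_mul, abs_mul,
              abs_mul, abs_of_pos hlam, abs_of_nonneg hk0R,
              abs_of_nonneg (by positivity : (0:ℝ) ≤ (k : ℝ) + 1)]
        _ ≤ lam * M + lam * M + lam * G + lam * G
            + ((C : ℝ) - 1) * M + (C : ℝ) * M := by
            have t1 := mul_le_mul_of_nonneg_left h0 hlam.le
            have t2 := mul_le_mul_of_nonneg_left h1 hlam.le
            have t3 := mul_le_mul_of_nonneg_left hg1 hlam.le
            have t4 := mul_le_mul_of_nonneg_left hg2 hlam.le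
            have t5 : (k : ℝ) * |ξ k - η k| ≤ ((C : ℝ) - 1) * M := by
              have := mul_le_mul_of_nonneg_left h1 hk0R
              have := mul_le_mul_of_nonneg_right hkR hM0
              nlinarith [abs_nonneg (ξ k - η k)]
            have t6 : ((k : ℝ) + 1) * |ξ (k + 1) - η (k + 1)| ≤ (C : ℝ) * M := by
              have h03 : (0 : ℝ) ≤ (k : ℝ) + 1 := by positivity
              have := mul_le_mul_of_nonneg_left h2 h03
              have hkk : (k : ℝ) + 1 ≤ (C : ℝ) := by linarith
              have := mul_le_mul_of_nonneg_right hkk hM0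
              nlinarith [abs_nonneg (ξ (k + 1) - η (k + 1))]
            linarith
        _ ≤ 8 * (d : ℝ) ^ 2 * (lam + 1) * ((C : ℝ) + 1) ^ 2 * M := by
            linarith
end

section
/- Let d, C be positive integers, λ > 0, and let F be the vector field of the routing model. For any ξ_0 in the simplex Δ^{C+1}_= = {ξ ≥ 0 : Σ_{k=0}^C ξ(k) = 1}, the ODE dξ_t/dt = F(ξ_t) with initial condition ξ_0 has a unique solution defined for all t ≥ 0, and moreover ξ_t ∈ Δ^{C+1}_= for all t ≥ 0. -/
namespace Stmt10Aux

open Finset Set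

/-! ### clamp -/

noncomputable def clamp (x : ℝ) : ℝ := max 0 (min x 1)

lemma clamp_nonneg (x : ℝ) : 0 ≤ clamp x := le_max_left _ _

lemma clamp_le_one (x : ℝ) : clamp x ≤ 1 := max_le zero_le_one (min_le_right _ _)

lemma clamp_eq {x : ℝ} (h0 : 0 ≤ x) (h1 : x ≤ 1) : clamp x = x := by
  unfold clamp; rw [min_eq_left h1, max_eq_right h0]

lemma clamp_of_nonpos {x : ℝ} (h : x ≤ 0) : clamp x = 0 := by
  unfold clamp
  rw [min_eq_left (h.trans zero_le_one), max_eq_left h]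

lemma abs_clamp_sub_clamp (a b : ℝ) : |clamp a - clamp b| ≤ |a - b| := by
  unfold clamp
  rw [max_comm 0 (min a 1), max_comm 0 (min b 1)]
  refine (abs_max_sub_max_le_abs _ _ _).trans ?_
  have := abs_min_sub_min_le_max a 1 b 1
  simpa using this

/-! ### modified building blocks -/

noncomputable def eta (ξ : ℕ → ℝ) (k : ℕ) : ℝ := clamp (ξ k)

noncomputable def pp (ξ : ℕ → ℝ) (j : ℕ) : ℝ := min (psum (eta ξ) j) 1

noncomputable def phi (d : ℕ) (ξ : ℕ → ℝ) (j : ℕ) : ℝ :=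
  ∑ r ∈ Finset.range d, (1 - pp ξ (j + 1) ^ 2) ^ r * (1 - pp ξ j ^ 2) ^ (d - 1 - r)

noncomputable def ghat (d C : ℕ) (ξ : ℕ → ℝ) (j : ℕ) : ℝ :=
  2 * eta ξ C * eta ξ j * pp ξ (j + 1) * phi d ξ j
  + 2 * eta ξ C * eta ξ j * ∑ i ∈ Finset.Ico (j + 1) C, eta ξ i * phi d ξ i

noncomputable def uu (d C : ℕ) (lam : ℝ) (ξ : ℕ → ℝ) (k : ℕ) : ℝ :=
  lam * eta ξ k + lam * ghat d C ξ k

noncomputable def Ghat (d C : ℕ) (lam : ℝ) (ξ : ℕ → ℝ) (k : ℕ) : ℝ :=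
  (if k < C then -uu d C lam ξ k else 0)
  + (if k = 0 then 0 else uu d C lam ξ (k - 1))
  + (if k < C then ((k : ℝ) + 1) * eta ξ (k + 1) else 0)
  - (k : ℝ) * eta ξ k

lemma eta_nonneg (ξ : ℕ → ℝ) (k : ℕ) : 0 ≤ eta ξ k := clamp_nonneg _
lemma eta_le_one (ξ : ℕ → ℝ) (k : ℕ) : eta ξ k ≤ 1 := clamp_le_one _

lemma pp_nonneg (ξ : ℕ → ℝ) (j : ℕ) : 0 ≤ pp ξ j :=
  le_min (Finset.sum_nonneg fun k _ => eta_nonneg ξ k) zero_le_one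

lemma pp_le_one (ξ : ℕ → ℝ) (j : ℕ) : pp ξ j ≤ 1 := min_le_right _ _

lemma one_sub_pp_sq_nonneg (ξ : ℕ → ℝ) (j : ℕ) : 0 ≤ 1 - pp ξ j ^ 2 := by
  have := pow_le_one₀ (pp_nonneg ξ j) (pp_le_one ξ j) (n := 2)
  linarith

lemma one_sub_pp_sq_le_one (ξ : ℕ → ℝ) (j : ℕ) : 1 - pp ξ j ^ 2 ≤ 1 := by
  have := pow_nonneg (pp_nonneg ξ j) 2
  linarith

lemma phi_nonneg (d : ℕ) (ξ : ℕ → ℝ) (j : ℕ) : 0 ≤ phi d ξ j :=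
  Finset.sum_nonneg fun r _ =>
    mul_nonneg (pow_nonneg (one_sub_pp_sq_nonneg ξ (j + 1)) r)
      (pow_nonneg (one_sub_pp_sq_nonneg ξ j) _)

lemma phi_le (d : ℕ) (ξ : ℕ → ℝ) (j : ℕ) : phi d ξ j ≤ d := by
  calc phi d ξ j ≤ ∑ _r ∈ Finset.range d, (1 : ℝ) := by
        refine Finset.sum_le_sum fun r _ => ?_
        refine mul_le_one₀ ?_ (pow_nonneg (one_sub_pp_sq_nonneg ξ j) _) ?_ <;>
          exact pow_le_one₀ (one_sub_pp_sq_nonneg ξ _) (one_sub_pp_sq_le_one ξ _)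
    _ = d := by simp

lemma ghat_nonneg (d C : ℕ) (ξ : ℕ → ℝ) (j : ℕ) : 0 ≤ ghat d C ξ j := by
  unfold ghat
  have h2 : (0:ℝ) ≤ 2 * eta ξ C * eta ξ j :=
    mul_nonneg (mul_nonneg (by norm_num) (eta_nonneg _ _)) (eta_nonneg _ _)
  refine add_nonneg (mul_nonneg (mul_nonneg h2 (pp_nonneg _ _)) (phi_nonneg _ _ _)) ?_
  exact mul_nonneg h2 (Finset.sum_nonneg fun i _ =>
    mul_nonneg (eta_nonneg _ _) (phi_nonneg _ _ _))

lemma uu_nonneg (d C : ℕ) {lam : ℝ} (hlam : 0 ≤ lam) (ξ : ℕ → ℝ) (k : ℕ) :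
    0 ≤ uu d C lam ξ k :=
  add_nonneg (mul_nonneg hlam (eta_nonneg _ _)) (mul_nonneg hlam (ghat_nonneg _ _ _ _))

/-- Key fact: `Ghat` is nonnegative at any point where the `k`-th coordinate is `≤ 0`. -/
lemma Ghat_nonneg_of_nonpos (d C : ℕ) {lam : ℝ} (hlam : 0 ≤ lam) (ξ : ℕ → ℝ) (k : ℕ)
    (hk : ξ k ≤ 0) : 0 ≤ Ghat d C lam ξ k := by
  have hek : eta ξ k = 0 := clamp_of_nonpos hk
  have hgk : ghat d C ξ k = 0 := by
    unfold ghat; rw [hek]; ring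
  have huk : uu d C lam ξ k = 0 := by unfold uu; rw [hek, hgk]; ring
  unfold Ghat
  rw [hek, huk, mul_zero, sub_zero]
  refine add_nonneg (add_nonneg ?_ ?_) ?_
  · split <;> simp
  · split
    · exact le_refl 0
    · exact uu_nonneg d C hlam ξ _
  · split
    · exact mul_nonneg (by positivity) (eta_nonneg _ _)
    · exact le_refl 0

/-- Key fact: the coordinates of `Ghat` always sum to zero. -/
lemma sum_Ghat (d C : ℕ) (lam : ℝ) (ξ : ℕ → ℝ) :
    ∑ k ∈ Finset.range (C + 1), Ghat d C lam ξ k = 0 := by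
  unfold Ghat
  rw [Finset.sum_sub_distrib, Finset.sum_add_distrib, Finset.sum_add_distrib]
  have hA : ∑ k ∈ Finset.range (C + 1), (if k < C then -uu d C lam ξ k else 0)
      = -∑ k ∈ Finset.range C, uu d C lam ξ k := by
    rw [Finset.sum_range_succ, if_neg (lt_irrefl C), add_zero, ← Finset.sum_neg_distrib]
    exact Finset.sum_congr rfl fun k hk => if_pos (Finset.mem_range.mp hk)
  have hB : ∑ k ∈ Finset.range (C + 1), (if k = 0 then 0 else uu d C lam ξ (k - 1))
      = ∑ k ∈ Finset.range C, uu d C lam ξ k := by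
    rw [Finset.sum_range_succ']
    simp
  have hD : ∑ k ∈ Finset.range (C + 1), (if k < C then ((k : ℝ) + 1) * eta ξ (k + 1) else 0)
      = ∑ k ∈ Finset.range C, ((k : ℝ) + 1) * eta ξ (k + 1) := by
    rw [Finset.sum_range_succ, if_neg (lt_irrefl C), add_zero]
    exact Finset.sum_congr rfl fun k hk => if_pos (Finset.mem_range.mp hk)
  have hE : ∑ k ∈ Finset.range (C + 1), (k : ℝ) * eta ξ k
      = ∑ k ∈ Finset.range C, ((k : ℝ) + 1) * eta ξ (k + 1) := by
    rw [Finset.sum_range_succ']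
    push_cast
    simp
  rw [hA, hB, hD, hE]
  ring

end Stmt10Aux

namespace Stmt10Aux

open Finset Set

/-! ### The simplex -/

def InSimplex (C : ℕ) (ξ : ℕ → ℝ) : Prop :=
  (∀ k ≤ C, 0 ≤ ξ k) ∧ ∑ k ∈ Finset.range (C + 1), ξ k = 1

lemma InSimplex.le_one {C : ℕ} {ξ : ℕ → ℝ} (hs : InSimplex C ξ) {k : ℕ} (hk : k ≤ C) :
    ξ k ≤ 1 := by
  rw [← hs.2]
  exact Finset.single_le_sum (fun i hi => hs.1 i (Nat.lt_succ_iff.mp (Finset.mem_range.mp hi)))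
    (Finset.mem_range.mpr (Nat.lt_succ_of_le hk))

lemma InSimplex.psum_le_one {C : ℕ} {ξ : ℕ → ℝ} (hs : InSimplex C ξ) {j : ℕ} (hj : j ≤ C + 1) :
    psum ξ j ≤ 1 := by
  rw [← hs.2]
  exact Finset.sum_le_sum_of_subset_of_nonneg
    (Finset.range_subset_range.mpr hj)
    (fun i hi _ => hs.1 i (Nat.lt_succ_iff.mp (Finset.mem_range.mp hi)))

lemma InSimplex.eta_eq {C : ℕ} {ξ : ℕ → ℝ} (hs : InSimplex C ξ) {k : ℕ} (hk : k ≤ C) :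
    eta ξ k = ξ k := clamp_eq (hs.1 k hk) (hs.le_one hk)

lemma InSimplex.pp_eq {C : ℕ} {ξ : ℕ → ℝ} (hs : InSimplex C ξ) {j : ℕ} (hj : j ≤ C) :
    pp ξ j = psum ξ j := by
  have h1 : psum (eta ξ) j = psum ξ j := by
    unfold psum
    exact Finset.sum_congr rfl fun k hk =>
      hs.eta_eq ((Nat.lt_of_lt_of_le (Finset.mem_range.mp hk) hj).le)
  unfold pp
  rw [h1, min_eq_left (hs.psum_le_one (hj.trans (Nat.le_succ C)))]

lemma InSimplex.phi_eq {C d : ℕ} {ξ : ℕ → ℝ} (hs : InSimplex C ξ) {j : ℕ} (hj : j + 1 ≤ C) :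
    phi d ξ j = ∑ r ∈ Finset.range d,
      (1 - (psum ξ (j + 1)) ^ 2) ^ r * (1 - (psum ξ j) ^ 2) ^ (d - 1 - r) := by
  unfold phi
  rw [hs.pp_eq hj, hs.pp_eq (Nat.le_of_succ_le hj)]

lemma InSimplex.ghat_eq {C d : ℕ} {ξ : ℕ → ℝ} (hs : InSimplex C ξ) {j : ℕ} (hj : j < C) :
    ghat d C ξ j = gfun d C ξ j := by
  unfold ghat gfun
  rw [hs.eta_eq (le_refl C), hs.eta_eq hj.le, hs.pp_eq hj, hs.phi_eq hj]
  congr 1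
  congr 1
  refine Finset.sum_congr rfl fun i hi => ?_
  obtain ⟨_, hi2⟩ := Finset.mem_Ico.mp hi
  rw [hs.eta_eq hi2.le, hs.phi_eq hi2]

lemma InSimplex.Ghat_eq_Fvec {C d : ℕ} {lam : ℝ} {ξ : ℕ → ℝ} (hs : InSimplex C ξ)
    (hC : 0 < C) {k : ℕ} (hk : k ≤ C) :
    Ghat d C lam ξ k = Fvec d C lam ξ k := by
  unfold Ghat Fvec uu
  rcases Nat.eq_zero_or_pos k with rfl | hk0
  · rw [if_pos hC, if_pos rfl, if_pos rfl, if_pos hC]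
    rw [hs.ghat_eq hC, hs.eta_eq (Nat.zero_le C), hs.eta_eq hC]
    push_cast
    ring
  · rcases eq_or_lt_of_le hk with rfl | hkC
    · rw [if_neg (lt_irrefl k), if_neg hk0.ne', if_neg (lt_irrefl k), if_neg hk0.ne',
        if_pos rfl, hs.eta_eq (le_refl k), hs.eta_eq (Nat.sub_le k 1),
        hs.ghat_eq (Nat.sub_lt hk0 Nat.one_pos)]
      ring
    · rw [if_pos hkC, if_neg hk0.ne', if_pos hkC, if_neg hk0.ne', if_neg hkC.ne,
        hs.eta_eq hk, hs.eta_eq hkC, hs.eta_eq ((Nat.sub_le k 1).trans hk),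
        hs.ghat_eq hkC, hs.ghat_eq ((Nat.sub_le k 1).trans_lt hkC)]
      ring

end Stmt10Aux

namespace Stmt10Aux

open Finset Set

/-! ### Fvec depends only on coordinates ≤ C -/

lemma psum_congr {ξ ξ' : ℕ → ℝ} {j : ℕ} (h : ∀ k < j, ξ k = ξ' k) :
    psum ξ j = psum ξ' j :=
  Finset.sum_congr rfl fun k hk => h k (Finset.mem_range.mp hk)

lemma gfun_congr {d C : ℕ} {ξ ξ' : ℕ → ℝ} (h : ∀ k ≤ C, ξ k = ξ' k) {j : ℕ} (hj : j < C) :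
    gfun d C ξ j = gfun d C ξ' j := by
  have hps : ∀ i ≤ C, psum ξ i = psum ξ' i := fun i hi =>
    psum_congr fun k hk => h k ((hk.trans_le hi).le)
  unfold gfun
  rw [h C (le_refl C), h j hj.le, hps (j + 1) hj, hps j hj.le]
  congr 1
  congr 1
  refine Finset.sum_congr rfl fun i hi => ?_
  obtain ⟨_, hi2⟩ := Finset.mem_Ico.mp hi
  rw [h i hi2.le, hps (i + 1) hi2, hps i hi2.le]

lemma Fvec_congr {d C : ℕ} (hC : 0 < C) {lam : ℝ} {ξ ξ' : ℕ → ℝ}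
    (h : ∀ k ≤ C, ξ k = ξ' k) {k : ℕ} (hk : k ≤ C) :
    Fvec d C lam ξ k = Fvec d C lam ξ' k := by
  unfold Fvec
  rcases Nat.eq_zero_or_pos k with rfl | hk0
  · rw [if_pos rfl, if_pos rfl, h 0 (Nat.zero_le C), h 1 hC, gfun_congr h hC]
  · rcases eq_or_lt_of_le hk with rfl | hkC
    · rw [if_neg hk0.ne', if_neg hk0.ne', if_pos rfl, if_pos rfl, h k (le_refl k),
        h (k - 1) (Nat.sub_le k 1), gfun_congr h (Nat.sub_lt hk0 Nat.one_pos)]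
    · rw [if_neg hk0.ne', if_neg hk0.ne', if_neg hkC.ne, if_neg hkC.ne,
        h k hk, h (k - 1) ((Nat.sub_le k 1).trans hk), h (k + 1) hkC,
        gfun_congr h hkC, gfun_congr h ((Nat.sub_le k 1).trans_lt hkC)]

/-! ### Extension of a finite vector to `ℕ → ℝ` -/

def ext (C : ℕ) (x : Fin (C + 1) → ℝ) : ℕ → ℝ :=
  fun k => if h : k < C + 1 then x ⟨k, h⟩ else 0

lemma ext_coe (C : ℕ) (x : Fin (C + 1) → ℝ) (i : Fin (C + 1)) : ext C x i = x i := by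
  simp [ext, Fin.is_le i]

lemma ext_of_le (C : ℕ) (x : Fin (C + 1) → ℝ) {k : ℕ} (hk : k ≤ C) :
    ext C x k = x ⟨k, Nat.lt_succ_of_le hk⟩ := dif_pos _

/-! ### Lipschitz-and-bounded functions on `Fin (C+1) → ℝ` -/

def LB {n : ℕ} (f : (Fin n → ℝ) → ℝ) : Prop :=
  ∃ K M : ℝ, 0 ≤ K ∧ (∀ x y, |f x - f y| ≤ K * dist x y) ∧ ∀ x, |f x| ≤ M

namespace LB

variable {n : ℕ} {f g : (Fin n → ℝ) → ℝ}

lemma const (c : ℝ) : LB (fun _ : Fin n → ℝ => c) :=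
  ⟨0, |c|, le_refl 0, fun x y => by simp, fun x => le_refl _⟩

lemma neg (hf : LB f) : LB (fun x => -f x) := by
  obtain ⟨K, M, hK, hL, hM⟩ := hf
  exact ⟨K, M, hK, fun x y => by rw [neg_sub_neg, dist_comm x y]; exact hL y x,
    fun x => by rw [abs_neg]; exact hM x⟩

lemma add (hf : LB f) (hg : LB g) : LB (fun x => f x + g x) := by
  obtain ⟨K, M, hK, hL, hM⟩ := hf
  obtain ⟨K', M', hK', hL', hM'⟩ := hg
  refine ⟨K + K', M + M', by linarith, fun x y => ?_, fun x => ?_⟩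
  · have := abs_add_le (f x - f y) (g x - g y)
    have h1 := hL x y; have h2 := hL' x y
    calc |f x + g x - (f y + g y)| = |f x - f y + (g x - g y)| := by ring_nf
      _ ≤ |f x - f y| + |g x - g y| := abs_add_le _ _
      _ ≤ K * dist x y + K' * dist x y := by linarith
      _ = (K + K') * dist x y := by ring
  · calc |f x + g x| ≤ |f x| + |g x| := abs_add_le _ _
      _ ≤ M + M' := by have := hM x; have := hM' x; linarith

lemma sub (hf : LB f) (hg : LB g) : LB (fun x => f x - g x) := by
  simpa [sub_eq_add_neg] using hf.add hg.neg

lemma mul (hf : LB f) (hg : LB g) : LB (fun x => f x * g x) := by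
  obtain ⟨K, M, hK, hL, hM⟩ := hf
  obtain ⟨K', M', hK', hL', hM'⟩ := hg
  have hM0 : 0 ≤ M := (abs_nonneg _).trans (hM (fun _ => 0))
  have hM0' : 0 ≤ M' := (abs_nonneg _).trans (hM' (fun _ => 0))
  refine ⟨K * M' + M * K', M * M', by positivity, fun x y => ?_, fun x => ?_⟩
  · have key : f x * g x - f y * g y = (f x - f y) * g x + f y * (g x - g y) := by ring
    have hd : (0:ℝ) ≤ dist x y := dist_nonneg
    calc |f x * g x - f y * g y| ≤ |(f x - f y) * g x| + |f y * (g x - g y)| := by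
          rw [key]; exact abs_add_le _ _
      _ = |f x - f y| * |g x| + |f y| * |g x - g y| := by rw [abs_mul, abs_mul]
      _ ≤ (K * dist x y) * M' + M * (K' * dist x y) := by
          have h1 := hL x y; have h2 := hL' x y; have h3 := hM y; have h4 := hM' x
          have := abs_nonneg (f x - f y); have := abs_nonneg (g x - g y)
          have := abs_nonneg (f y); have := abs_nonneg (g x)
          nlinarith
      _ = (K * M' + M * K') * dist x y := by ring
  · rw [abs_mul]
    exact mul_le_mul (hM x) (hM' x) (abs_nonneg _) hM0

lemma sum {ι : Type*} (s : Finset ι) (F : ι → (Fin n → ℝ) → ℝ)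
    (h : ∀ i ∈ s, LB (F i)) : LB (fun x => ∑ i ∈ s, F i x) := by
  classical
  induction s using Finset.induction_on with
  | empty => simpa using const 0
  | @insert a s' hnotmem ih =>
    simp only [Finset.sum_insert hnotmem]
    exact (h a (Finset.mem_insert_self a s')).add
      (ih fun i hi => h i (Finset.mem_insert_of_mem hi))

lemma pow (hf : LB f) (m : ℕ) : LB (fun x => f x ^ m) := by
  induction m with
  | zero => simpa using const 1
  | succ m ih => simpa [pow_succ] using ih.mul hf

lemma min_one (hf : LB f) : LB (fun x => min (f x) 1) := by
  obtain ⟨K, M, hK, hL, hM⟩ := hf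
  refine ⟨K, max M 1, hK, fun x y => ?_, fun x => ?_⟩
  · refine le_trans ?_ (hL x y)
    have := abs_min_sub_min_le_max (f x) 1 (f y) 1
    simpa using this
  · have h1 : min (f x) 1 ≤ max M 1 := le_trans (min_le_right _ _) (le_max_right _ _)
    have h2 : -(max M 1) ≤ min (f x) 1 := by
      have := neg_abs_le (f x)
      have := hM x
      have h3 : -(max M 1) ≤ -M := neg_le_neg (le_max_left _ _)
      rcases le_or_gt (f x) 1 with h | h
      · rw [min_eq_left h]; linarith
      · rw [min_eq_right h.le]; have : (0:ℝ) ≤ max M 1 := le_trans zero_le_one (le_max_right _ _); linarith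
    exact abs_le.mpr ⟨h2, h1⟩

end LB

/-- The coordinate/clamp atoms are Lipschitz and bounded. -/
lemma LB_eta (C : ℕ) (k : ℕ) : LB (fun x : Fin (C + 1) → ℝ => eta (ext C x) k) := by
  refine ⟨1, 1, zero_le_one, fun x y => ?_, fun x => ?_⟩
  · unfold eta
    refine (abs_clamp_sub_clamp _ _).trans ?_
    rw [one_mul]
    unfold ext
    split
    · rw [← Real.dist_eq]
      exact dist_le_pi_dist x y _
    · simpa using dist_nonneg
  · rw [abs_of_nonneg (eta_nonneg _ _)]
    exact eta_le_one _ _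

lemma LB_pp (C : ℕ) (j : ℕ) : LB (fun x : Fin (C + 1) → ℝ => pp (ext C x) j) := by
  unfold pp psum
  exact (LB.sum (Finset.range j) (fun k x => eta (ext C x) k)
    (fun k _ => LB_eta C k)).min_one

lemma LB_phi (C d : ℕ) (j : ℕ) : LB (fun x : Fin (C + 1) → ℝ => phi d (ext C x) j) := by
  unfold phi
  refine LB.sum _ _ fun r _ => LB.mul ?_ ?_
  · exact ((LB.const 1).sub ((LB_pp C (j + 1)).pow 2)).pow r
  · exact ((LB.const 1).sub ((LB_pp C j).pow 2)).pow _

lemma LB_ghat (C d : ℕ) (j : ℕ) : LB (fun x : Fin (C + 1) → ℝ => ghat d C (ext C x) j) := by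
  unfold ghat
  refine LB.add (LB.mul (LB.mul (LB.mul ?_ ?_) ?_) ?_) (LB.mul (LB.mul ?_ ?_) ?_)
  · exact (LB.const 2).mul (LB_eta C C)
  · exact LB_eta C j
  · exact LB_pp C (j + 1)
  · exact LB_phi C d j
  · exact (LB.const 2).mul (LB_eta C C)
  · exact LB_eta C j
  · exact LB.sum _ _ fun i _ => (LB_eta C i).mul (LB_phi C d i)

lemma LB_uu (C d : ℕ) (lam : ℝ) (k : ℕ) :
    LB (fun x : Fin (C + 1) → ℝ => uu d C lam (ext C x) k) := by
  unfold uu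
  exact ((LB.const lam).mul (LB_eta C k)).add ((LB.const lam).mul (LB_ghat C d k))

lemma LB_Ghat (C d : ℕ) (lam : ℝ) (k : ℕ) :
    LB (fun x : Fin (C + 1) → ℝ => Ghat d C lam (ext C x) k) := by
  unfold Ghat
  refine LB.sub (LB.add (LB.add ?_ ?_) ?_) ((LB.const (k : ℝ)).mul (LB_eta C k))
  · split
    · exact (LB_uu C d lam k).neg
    · exact LB.const 0
  · split
    · exact LB.const 0
    · exact LB_uu C d lam (k - 1)
  · split
    · exact (LB.const ((k : ℝ) + 1)).mul (LB_eta C (k + 1))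
    · exact LB.const 0

end Stmt10Aux

namespace Stmt10Aux

open Finset Set Metric

variable {d C : ℕ} {lam : ℝ}

noncomputable def GhatE (d C : ℕ) (lam : ℝ) (x : Fin (C + 1) → ℝ) : Fin (C + 1) → ℝ :=
  fun i => Ghat d C lam (ext C x) i

lemma GhatE_lipschitz_bound (d C : ℕ) (lam : ℝ) :
    ∃ (K : NNReal) (M : ℝ), 0 ≤ M ∧ LipschitzWith K (GhatE d C lam) ∧
      ∀ x, ‖GhatE d C lam x‖ ≤ M := by
  have h := fun i : Fin (C + 1) => LB_Ghat C d lam (i : ℕ)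
  choose K M hK hL hM using h
  set K0 : ℝ := ∑ i, K i with hK0def
  set M0 : ℝ := ∑ i, M i with hM0def
  have hK0 : 0 ≤ K0 := Finset.sum_nonneg fun i _ => hK i
  have hMi : ∀ i, 0 ≤ M i := fun i => (abs_nonneg _).trans (hM i (fun _ => 0))
  have hM0 : 0 ≤ M0 := Finset.sum_nonneg fun i _ => hMi i
  have hKle : ∀ i, K i ≤ K0 := fun i =>
    Finset.single_le_sum (fun j _ => hK j) (Finset.mem_univ i)
  have hMle : ∀ i, M i ≤ M0 := fun i =>
    Finset.single_le_sum (fun j _ => hMi j) (Finset.mem_univ i)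
  refine ⟨K0.toNNReal, M0, hM0, ?_, ?_⟩
  · apply LipschitzWith.of_dist_le_mul
    intro x y
    rw [Real.coe_toNNReal _ hK0]
    refine (dist_pi_le_iff (by positivity)).mpr fun i => ?_
    rw [Real.dist_eq]
    calc |GhatE d C lam x i - GhatE d C lam y i| ≤ K i * dist x y := hL i x y
      _ ≤ K0 * dist x y := mul_le_mul_of_nonneg_right (hKle i) dist_nonneg
  · intro x
    refine (pi_norm_le_iff_of_nonneg hM0).mpr fun i => ?_
    rw [Real.norm_eq_abs]
    exact (hM i x).trans (hMle i)

/-- Global-in-time solutions for the modified (globally Lipschitz, bounded) field. -/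
lemma exists_global_solution (d C : ℕ) (lam : ℝ) (x₀ : Fin (C + 1) → ℝ) :
    ∃ f : ℝ → (Fin (C + 1) → ℝ), f 0 = x₀ ∧
      ∀ t : ℝ, HasDerivAt f (GhatE d C lam (f t)) t := by
  obtain ⟨K, M, hM0, hLip, hBd⟩ := GhatE_lipschitz_bound d C lam
  have hn : ∀ n : ℕ, ∃ α : ℝ → (Fin (C + 1) → ℝ), α 0 = x₀ ∧
      ∀ t ∈ Ioo (-((n : ℝ) + 1)) ((n : ℝ) + 1), HasDerivAt α (GhatE d C lam (α t)) t := by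
    intro n
    have hn1 : (0:ℝ) < (n : ℝ) + 1 := by positivity
    have hpl : IsPicardLindelof (fun _ x => GhatE d C lam x) (tmin := -((n : ℝ) + 1))
        (tmax := (n : ℝ) + 1) ⟨0, by constructor <;> linarith⟩
        x₀ (M.toNNReal * ((n : NNReal) + 1)) 0 M.toNNReal K :=
      IsPicardLindelof.of_time_independent (fun x _ => (hBd x).trans (Real.le_coe_toNNReal M))
        hLip.lipschitzOnWith (by
          simp only [NNReal.coe_mul, NNReal.coe_add, NNReal.coe_natCast, NNReal.coe_one,
            NNReal.coe_zero, sub_zero, zero_sub, neg_neg, max_self]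
          exact le_refl _)
    obtain ⟨α, hα0, hαd⟩ := hpl.exists_eq_forall_mem_Icc_hasDerivWithinAt₀
    refine ⟨α, hα0, fun t ht => ?_⟩
    exact (hαd t (Ioo_subset_Icc_self ht)).hasDerivAt (Icc_mem_nhds ht.1 ht.2)
  choose α hα0 hαd using hn
  have huniq : ∀ (m n : ℕ) (t : ℝ), |t| < min ((m : ℝ) + 1) ((n : ℝ) + 1) → α m t = α n t := by
    intro m n t ht
    have hmem : ∀ p : ℕ, Ioo (-(min ((m : ℝ) + 1) ((n : ℝ) + 1)))
        (min ((m : ℝ) + 1) ((n : ℝ) + 1)) ⊆ Ioo (-((p : ℝ) + 1)) ((p : ℝ) + 1) → True :=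
      fun _ _ => trivial
    have h0mem : (0 : ℝ) ∈ Ioo (-(min ((m : ℝ) + 1) ((n : ℝ) + 1)))
        (min ((m : ℝ) + 1) ((n : ℝ) + 1)) := by
      constructor
      · simp only [neg_lt, neg_zero]
        exact lt_min (by positivity) (by positivity)
      · exact lt_min (by positivity) (by positivity)
    have key := ODE_solution_unique_of_mem_Ioo
      (v := fun _ x => GhatE d C lam x) (s := fun _ => (univ : Set (Fin (C+1) → ℝ)))
      (K := K) (fun _ _ => hLip.lipschitzOnWith) h0mem
      (f := α m) (g := α n) ?_ ?_ ?_
    · exact key (abs_lt.mp ht |> fun h => ⟨h.1, h.2⟩)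
    · intro s hs
      refine ⟨hαd m s ⟨?_, ?_⟩, trivial⟩
      · have := hs.1; have := min_le_left ((m : ℝ) + 1) ((n : ℝ) + 1); linarith
      · exact hs.2.trans_le (min_le_left _ _)
    · intro s hs
      refine ⟨hαd n s ⟨?_, ?_⟩, trivial⟩
      · have := hs.1; have := min_le_right ((m : ℝ) + 1) ((n : ℝ) + 1); linarith
      · exact hs.2.trans_le (min_le_right _ _)
    · rw [hα0 m, hα0 n]
  refine ⟨fun t => α ⌈|t|⌉₊ t, by simpa using hα0 0, fun t => ?_⟩
  set n : ℕ := ⌈|t|⌉₊ + 1 with hn_def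
  have htn : |t| < (n : ℝ) := by
    have := Nat.le_ceil |t|
    push_cast [hn_def]
    linarith
  have hglue : ∀ s ∈ Ioo (-(n : ℝ)) (n : ℝ), α ⌈|s|⌉₊ s = α n s := by
    intro s hs
    have habs : |s| < (n : ℝ) := abs_lt.mpr ⟨by linarith [hs.1], hs.2⟩
    refine huniq _ _ s (lt_min ?_ ?_)
    · have h1 := Nat.le_ceil |s|; linarith
    · linarith
  obtain ⟨htn1, htn2⟩ := abs_lt.mp htn
  have hmem : Ioo (-(n : ℝ)) (n : ℝ) ∈ nhds t := Ioo_mem_nhds htn1 htn2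
  have hd : HasDerivAt (α n) (GhatE d C lam (α n t)) t := by
    refine hαd n t ⟨by linarith, by linarith⟩
  have heq : (fun s => α ⌈|s|⌉₊ s) =ᶠ[nhds t] α n :=
    Filter.eventually_of_mem hmem hglue
  have hteq : α ⌈|t|⌉₊ t = α n t := hglue t ⟨htn1, htn2⟩
  have := hd.congr_of_eventuallyEq heq
  rwa [← hteq] at this

end Stmt10Aux

namespace Stmt10Aux

open Finset Set Metric

/-- A scalar invariance lemma: if `f 0 ≥ 0` and the derivative is nonnegative whenever
`f ≤ 0`, then `f` stays nonnegative in forward time. -/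
lemma nonneg_of_deriv {f F : ℝ → ℝ} (hf : ∀ t, HasDerivAt f (F t) t) (h0 : 0 ≤ f 0)
    (hF : ∀ t, f t ≤ 0 → 0 ≤ F t) : ∀ t, 0 ≤ t → 0 ≤ f t := by
  intro t1 ht1
  by_contra hneg
  push_neg at hneg
  have hcont : Continuous f := by
    rw [continuous_iff_continuousAt]; exact fun t => (hf t).continuousAt
  set A : Set ℝ := Icc 0 t1 ∩ f ⁻¹' (Ici 0) with hA
  have hclosed : IsClosed A := isClosed_Icc.inter (isClosed_Ici.preimage hcont)
  have h0A : (0 : ℝ) ∈ A := ⟨⟨le_refl 0, ht1⟩, h0⟩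
  have hbdd : BddAbove A := ⟨t1, fun s hs => hs.1.2⟩
  set s0 := sSup A with hs0def
  have hs0A : s0 ∈ A := hclosed.csSup_mem ⟨0, h0A⟩ hbdd
  have hfs0 : 0 ≤ f s0 := hs0A.2
  have hs0le : s0 ≤ t1 := hs0A.1.2
  have hs0lt : s0 < t1 := lt_of_le_of_ne hs0le fun h => absurd (h ▸ hfs0) (not_le.mpr hneg)
  have hnegIoc : ∀ s ∈ Ioc s0 t1, f s < 0 := by
    intro s hs
    by_contra hge
    push_neg at hge
    have hsA : s ∈ A := ⟨⟨hs0A.1.1.trans hs.1.le, hs.2⟩, hge⟩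
    exact absurd (le_csSup hbdd hsA) (not_le.mpr hs.1)
  have hmono : MonotoneOn f (Icc s0 t1) := by
    refine monotoneOn_of_deriv_nonneg (convex_Icc s0 t1) hcont.continuousOn
      (fun x _ => (hf x).differentiableAt.differentiableWithinAt) (fun x hx => ?_)
    rw [interior_Icc] at hx
    rw [(hf x).deriv]
    exact hF x (hnegIoc x ⟨hx.1, hx.2.le⟩).le
  have := hmono ⟨le_refl s0, hs0lt.le⟩ ⟨hs0lt.le, le_refl t1⟩ hs0lt.le
  linarith

/-- Existence of a solution of the routing ODE staying in the simplex. -/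
lemma exists_simplex_solution (d C : ℕ) (hC : 0 < C) {lam : ℝ} (hlam : 0 < lam)
    (ξ₀ : ℕ → ℝ) (h0 : ∀ k ≤ C, 0 ≤ ξ₀ k) (h1 : ∑ k ∈ Finset.range (C + 1), ξ₀ k = 1) :
    ∃ ξ : ℝ → ℕ → ℝ,
      (∀ k ≤ C, ξ 0 k = ξ₀ k) ∧
      (∀ t : ℝ, 0 ≤ t → ∀ k ≤ C,
        HasDerivAt (fun s => ξ s k) (Fvec d C lam (ξ t) k) t) ∧
      (∀ t : ℝ, 0 ≤ t → InSimplex C (ξ t)) := by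
  set x₀ : Fin (C + 1) → ℝ := fun i => ξ₀ i with hx₀
  obtain ⟨f, hf0, hfd⟩ := exists_global_solution d C lam x₀
  have hco : ∀ (i : Fin (C + 1)) (t : ℝ),
      HasDerivAt (fun s => f s i) (Ghat d C lam (ext C (f t)) i) t :=
    fun i t => hasDerivAt_pi.mp (hfd t) i
  -- the sum of coordinates is constant equal to 1
  have hSd : ∀ t : ℝ, HasDerivAt (fun s => ∑ i : Fin (C + 1), f s i) 0 t := by
    intro t
    have h : HasDerivAt (fun s => ∑ i : Fin (C + 1), f s i)
        (∑ i : Fin (C + 1), Ghat d C lam (ext C (f t)) (i : ℕ)) t :=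
      HasDerivAt.fun_sum (fun i _ => hco i t)
    have hz : ∑ i : Fin (C + 1), Ghat d C lam (ext C (f t)) (i : ℕ) = 0 := by
      rw [Fin.sum_univ_eq_sum_range (fun k => Ghat d C lam (ext C (f t)) k) (C + 1)]
      exact sum_Ghat d C lam (ext C (f t))
    rwa [hz] at h
  have hSconst : ∀ t : ℝ, ∑ i : Fin (C + 1), f t i = 1 := by
    have hkonst := is_const_of_deriv_eq_zero (𝕜 := ℝ)
      (f := fun s => ∑ i : Fin (C + 1), f s i)
      (fun t => (hSd t).differentiableAt) (fun t => (hSd t).deriv)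
    intro t
    have h2 : ∑ i : Fin (C + 1), f t i = ∑ i : Fin (C + 1), f 0 i := hkonst t 0
    have h3 : ∑ i : Fin (C + 1), x₀ i = 1 := by
      show ∑ i : Fin (C + 1), ξ₀ (i : ℕ) = 1
      rw [Fin.sum_univ_eq_sum_range (fun k => ξ₀ k) (C + 1)]
      exact h1
    rw [h2, hf0]
    exact h3
  -- coordinates stay nonnegative in forward time
  have hpos : ∀ (i : Fin (C + 1)) (t : ℝ), 0 ≤ t → 0 ≤ f t i := by
    intro i
    refine nonneg_of_deriv (hco i) ?_ ?_
    · rw [hf0]; exact h0 i (Nat.lt_succ_iff.mp i.isLt)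
    · intro t hle
      refine Ghat_nonneg_of_nonpos d C hlam.le (ext C (f t)) i ?_
      rwa [ext_coe]
  refine ⟨fun t => ext C (f t), ?_, ?_, ?_⟩
  · intro k hk
    show ext C (f 0) k = ξ₀ k
    rw [ext_of_le C (f 0) hk, hf0]
  · intro t ht k hk
    have hsimp : InSimplex C (ext C (f t)) := by
      constructor
      · intro k' hk'
        rw [ext_of_le C (f t) hk']
        exact hpos _ t ht
      · rw [← Fin.sum_univ_eq_sum_range (fun k => ext C (f t) k) (C + 1)]
        calc ∑ i : Fin (C + 1), ext C (f t) (i : ℕ) = ∑ i : Fin (C + 1), f t i :=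
              Finset.sum_congr rfl fun i _ => ext_coe C (f t) i
          _ = 1 := hSconst t
    have hk' : k < C + 1 := Nat.lt_succ_of_le hk
    have heq : (fun s => ext C (f s) k) = fun s => f s ⟨k, hk'⟩ := by
      funext s; exact ext_of_le C (f s) hk
    show HasDerivAt (fun s => ext C (f s) k) (Fvec d C lam (ext C (f t)) k) t
    rw [heq]
    have := hco ⟨k, hk'⟩ t
    rwa [hsimp.Ghat_eq_Fvec hC hk] at this
  · intro t ht
    constructor
    · intro k' hk'
      show 0 ≤ ext C (f t) k'
      rw [ext_of_le C (f t) hk']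
      exact hpos _ t ht
    · show ∑ k ∈ Finset.range (C + 1), ext C (f t) k = 1
      rw [← Fin.sum_univ_eq_sum_range (fun k => ext C (f t) k) (C + 1)]
      calc ∑ i : Fin (C + 1), ext C (f t) (i : ℕ) = ∑ i : Fin (C + 1), f t i :=
            Finset.sum_congr rfl fun i _ => ext_coe C (f t) i
        _ = 1 := hSconst t

end Stmt10Aux

namespace Stmt10Aux

open Finset Set Metric Filter

variable {d C : ℕ} {lam : ℝ}

lemma contDiff_ext (C : ℕ) (k : ℕ) :
    ContDiff ℝ 1 (fun x : Fin (C + 1) → ℝ => ext C x k) := by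
  unfold ext
  split
  · exact contDiff_apply ℝ ℝ _
  · exact contDiff_const

lemma contDiff_psum (C : ℕ) (j : ℕ) :
    ContDiff ℝ 1 (fun x : Fin (C + 1) → ℝ => psum (ext C x) j) := by
  unfold psum
  exact ContDiff.sum fun k _ => contDiff_ext C k

lemma contDiff_inner (C d : ℕ) (j : ℕ) :
    ContDiff ℝ 1 (fun x : Fin (C + 1) → ℝ => ∑ r ∈ Finset.range d,
      (1 - (psum (ext C x) (j + 1)) ^ 2) ^ r * (1 - (psum (ext C x) j) ^ 2) ^ (d - 1 - r)) := by
  refine ContDiff.sum fun r _ => ContDiff.mul ?_ ?_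
  · exact (contDiff_const.sub ((contDiff_psum C (j + 1)).pow 2)).pow r
  · exact (contDiff_const.sub ((contDiff_psum C j).pow 2)).pow _

lemma contDiff_gfun (C d : ℕ) (j : ℕ) :
    ContDiff ℝ 1 (fun x : Fin (C + 1) → ℝ => gfun d C (ext C x) j) := by
  unfold gfun
  refine ContDiff.add ?_ ?_
  · exact ((((contDiff_const.mul (contDiff_ext C C)).mul (contDiff_ext C j)).mul
      (contDiff_psum C (j + 1))).mul (contDiff_inner C d j))
  · refine ((contDiff_const.mul (contDiff_ext C C)).mul (contDiff_ext C j)).mul ?_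
    exact ContDiff.sum fun i _ => (contDiff_ext C i).mul (contDiff_inner C d i)

lemma contDiff_FvecE (d C : ℕ) (lam : ℝ) :
    ContDiff ℝ 1 (fun x : Fin (C + 1) → ℝ => (fun i : Fin (C + 1) =>
      Fvec d C lam (ext C x) (i : ℕ))) := by
  rw [contDiff_pi]
  intro i
  unfold Fvec
  rcases eq_or_ne (i : ℕ) 0 with h0 | h0
  · simp only [h0, if_pos rfl]
    exact ((contDiff_const.mul (contDiff_ext C 0)).sub
      (contDiff_const.mul (contDiff_gfun C d 0))).add (contDiff_ext C 1)
  · simp only [if_neg h0]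
    rcases eq_or_ne (i : ℕ) C with hC | hC
    · simp only [hC, if_pos rfl]
      exact ((contDiff_const.mul (contDiff_ext C (C - 1))).add
        (contDiff_const.mul (contDiff_gfun C d (C - 1)))).sub
        (contDiff_const.mul (contDiff_ext C C))
    · simp only [if_neg hC]
      refine ContDiff.add (ContDiff.sub (ContDiff.sub (ContDiff.add (ContDiff.sub ?_ ?_) ?_) ?_) ?_) ?_
      · exact contDiff_const.mul (contDiff_ext C ((i : ℕ) - 1))
      · exact contDiff_const.mul (contDiff_ext C i)
      · exact contDiff_const.mul (contDiff_gfun C d ((i : ℕ) - 1))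
      · exact contDiff_const.mul (contDiff_gfun C d i)
      · exact contDiff_const.mul (contDiff_ext C i)
      · exact contDiff_const.mul (contDiff_ext C ((i : ℕ) + 1))

/-- Uniqueness of forward-time solutions for a locally Lipschitz vector field. -/
lemma uniq_of_locallyLipschitz {n : ℕ} {F : (Fin n → ℝ) → (Fin n → ℝ)}
    (hF : LocallyLipschitz F) {X Y : ℝ → Fin n → ℝ}
    (hX : ∀ t : ℝ, 0 ≤ t → HasDerivAt X (F (X t)) t)
    (hY : ∀ t : ℝ, 0 ≤ t → HasDerivAt Y (F (Y t)) t)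
    (h0 : X 0 = Y 0) : ∀ t : ℝ, 0 ≤ t → X t = Y t := by
  intro T hT
  set A : Set ℝ := {t | t ∈ Icc 0 T ∧ ∀ s ∈ Icc 0 t, X s = Y s} with hA
  have h0A : (0 : ℝ) ∈ A := by
    refine ⟨⟨le_refl 0, hT⟩, fun s hs => ?_⟩
    have : s = 0 := le_antisymm hs.2 hs.1
    rw [this, h0]
  have hbdd : BddAbove A := ⟨T, fun a ha => ha.1.2⟩
  have hne : A.Nonempty := ⟨0, h0A⟩
  set τ := sSup A with hτdef
  have hτ0 : 0 ≤ τ := le_csSup hbdd h0A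
  have hτT : τ ≤ T := csSup_le hne fun a ha => ha.1.2
  have hagree : ∀ s, 0 ≤ s → s < τ → X s = Y s := by
    intro s hs hsτ
    obtain ⟨a, haA, hsa⟩ := exists_lt_of_lt_csSup hne hsτ
    exact haA.2 s ⟨hs, hsa.le⟩
  have hXτY : X τ = Y τ := by
    rcases eq_or_lt_of_le hτ0 with heq | hτpos
    · rw [← heq]; exact h0
    · have hXc : Tendsto X (nhdsWithin τ (Iio τ)) (nhds (X τ)) :=
        ((hX τ hτ0).continuousAt.continuousWithinAt).tendsto
      have hYc : Tendsto Y (nhdsWithin τ (Iio τ)) (nhds (Y τ)) :=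
        ((hY τ hτ0).continuousAt.continuousWithinAt).tendsto
      have heq : X =ᶠ[nhdsWithin τ (Iio τ)] Y := by
        have hpos : ∀ᶠ s in nhdsWithin τ (Iio τ), (0 : ℝ) < s :=
          eventually_nhdsWithin_of_eventually_nhds (eventually_gt_nhds hτpos)
        filter_upwards [self_mem_nhdsWithin, hpos] with s hs1 hs2
        exact hagree s hs2.le hs1
      exact tendsto_nhds_unique (hXc.congr' heq) hYc
  have hτA : τ ∈ A := by
    refine ⟨⟨hτ0, hτT⟩, fun s hs => ?_⟩
    rcases eq_or_lt_of_le hs.2 with rfl | hlt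
    · exact hXτY
    · exact hagree s hs.1 hlt
  rcases eq_or_lt_of_le hτT with heq | hτlt
  · rw [← heq]; exact hτA.2 τ ⟨hτ0, le_refl τ⟩
  exfalso
  obtain ⟨K, U, hU, hLip⟩ := hF (X τ)
  obtain ⟨ε, hε, hball⟩ := Metric.mem_nhds_iff.mp hU
  have hXcont : ContinuousAt X τ := (hX τ hτ0).continuousAt
  have hYcont : ContinuousAt Y τ := (hY τ hτ0).continuousAt
  obtain ⟨δ1, hδ1, hXδ⟩ := Metric.continuousAt_iff.mp hXcont ε hε
  obtain ⟨δ2, hδ2, hYδ⟩ := Metric.continuousAt_iff.mp hYcont ε hε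
  set δ : ℝ := min (min δ1 δ2 / 2) (T - τ) with hδdef
  have hδpos : 0 < δ := lt_min (by positivity) (by linarith)
  have hδlt1 : δ < δ1 := lt_of_le_of_lt (min_le_left _ _) (by
    have : min δ1 δ2 ≤ δ1 := min_le_left _ _
    linarith [lt_min hδ1 hδ2])
  have hδlt2 : δ < δ2 := lt_of_le_of_lt (min_le_left _ _) (by
    have : min δ1 δ2 ≤ δ2 := min_le_right _ _
    linarith [lt_min hδ1 hδ2])
  have hδT : τ + δ ≤ T := by
    have := min_le_right (min δ1 δ2 / 2) (T - τ); linarith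
  have hXin : ∀ s ∈ Icc τ (τ + δ), X s ∈ ball (X τ) ε := by
    intro s hs
    exact hXδ (by rw [Real.dist_eq, abs_of_nonneg (by linarith [hs.1])]; linarith [hs.2])
  have hYin : ∀ s ∈ Icc τ (τ + δ), Y s ∈ ball (X τ) ε := by
    intro s hs
    have h5 := hYδ (x := s) (by rw [Real.dist_eq, abs_of_nonneg (by linarith [hs.1])]; linarith [hs.2])
    rw [mem_ball, hXτY]
    exact h5
  have hEq : EqOn X Y (Icc τ (τ + δ)) := by
    refine ODE_solution_unique_of_mem_Icc_right (v := fun _ x => F x)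
      (s := fun _ => ball (X τ) ε) (K := K)
      (fun _ _ => hLip.mono hball) ?_ ?_ ?_ ?_ ?_ ?_ hXτY
    · exact fun s hs => ((hX s (hτ0.trans hs.1)).continuousAt).continuousWithinAt
    · exact fun s hs => ((hX s (hτ0.trans hs.1)).hasDerivWithinAt)
    · exact fun s hs => hXin s (Ico_subset_Icc_self hs)
    · exact fun s hs => ((hY s (hτ0.trans hs.1)).continuousAt).continuousWithinAt
    · exact fun s hs => ((hY s (hτ0.trans hs.1)).hasDerivWithinAt)
    · exact fun s hs => hYin s (Ico_subset_Icc_self hs)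
  have hbA : τ + δ ∈ A := by
    refine ⟨⟨by linarith, hδT⟩, fun s hs => ?_⟩
    rcases le_or_gt s τ with hsτ | hsτ
    · exact hτA.2 s ⟨hs.1, hsτ⟩
    · exact hEq ⟨hsτ.le, hs.2⟩
  have := le_csSup hbdd hbA
  linarith

end Stmt10Aux


/-- For any initial condition in the probability simplex, the routing-model ODE
`dξ/dt = F(ξ)` has a solution defined for all `t ≥ 0` which stays in the simplex,
and this solution is unique (on coordinates `0,…,C`). -/
theorem stmt10 (d C : ℕ) (hd : 0 < d) (hC : 0 < C) (lam : ℝ) (hlam : 0 < lam)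
    (ξ₀ : ℕ → ℝ) (hξ₀0 : ∀ k ≤ C, 0 ≤ ξ₀ k)
    (hξ₀1 : ∑ k ∈ Finset.range (C + 1), ξ₀ k = 1) :
    (∃ ξ : ℝ → ℕ → ℝ,
      (∀ k ≤ C, ξ 0 k = ξ₀ k) ∧
      (∀ t : ℝ, 0 ≤ t → ∀ k ≤ C,
        HasDerivAt (fun s => ξ s k) (Fvec d C lam (ξ t) k) t) ∧
      (∀ t : ℝ, 0 ≤ t →
        (∀ k ≤ C, 0 ≤ ξ t k) ∧ ∑ k ∈ Finset.range (C + 1), ξ t k = 1)) ∧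
    (∀ ξ η : ℝ → ℕ → ℝ,
      (∀ k ≤ C, ξ 0 k = ξ₀ k) →
      (∀ t : ℝ, 0 ≤ t → ∀ k ≤ C,
        HasDerivAt (fun s => ξ s k) (Fvec d C lam (ξ t) k) t) →
      (∀ k ≤ C, η 0 k = ξ₀ k) →
      (∀ t : ℝ, 0 ≤ t → ∀ k ≤ C,
        HasDerivAt (fun s => η s k) (Fvec d C lam (η t) k) t) →
      ∀ t : ℝ, 0 ≤ t → ∀ k ≤ C, ξ t k = η t k) := by
  constructor
  · obtain ⟨ξ, hξi, hξd, hsimp⟩ :=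
      Stmt10Aux.exists_simplex_solution d C hC hlam ξ₀ hξ₀0 hξ₀1
    exact ⟨ξ, hξi, hξd, fun t ht => ⟨(hsimp t ht).1, (hsimp t ht).2⟩⟩
  · intro ξ η hξi hξd hηi hηd t ht k hk
    have hFElip : LocallyLipschitz (fun x : Fin (C + 1) → ℝ =>
        (fun i : Fin (C + 1) => Fvec d C lam (Stmt10Aux.ext C x) (i : ℕ))) :=
      (Stmt10Aux.contDiff_FvecE d C lam).locallyLipschitz
    have hXd : ∀ t : ℝ, 0 ≤ t → HasDerivAt (fun s (i : Fin (C + 1)) => ξ s (i : ℕ))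
        ((fun i : Fin (C + 1) =>
          Fvec d C lam (Stmt10Aux.ext C (fun i : Fin (C + 1) => ξ t (i : ℕ))) (i : ℕ))) t := by
      intro t' ht'
      refine hasDerivAt_pi.mpr fun i => ?_
      have hder := hξd t' ht' (i : ℕ) (Nat.lt_succ_iff.mp i.isLt)
      have hcongr : ∀ k ≤ C, ξ t' k = Stmt10Aux.ext C (fun i : Fin (C + 1) => ξ t' (i : ℕ)) k :=
        fun k hk => (Stmt10Aux.ext_of_le C (fun i : Fin (C + 1) => ξ t' (i : ℕ)) hk).symm
      have hval := Stmt10Aux.Fvec_congr (d := d) (lam := lam) hC hcongr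
        (Nat.lt_succ_iff.mp i.isLt)
      exact hval ▸ hder
    have hYd : ∀ t : ℝ, 0 ≤ t → HasDerivAt (fun s (i : Fin (C + 1)) => η s (i : ℕ))
        ((fun i : Fin (C + 1) =>
          Fvec d C lam (Stmt10Aux.ext C (fun i : Fin (C + 1) => η t (i : ℕ))) (i : ℕ))) t := by
      intro t' ht'
      refine hasDerivAt_pi.mpr fun i => ?_
      have hder := hηd t' ht' (i : ℕ) (Nat.lt_succ_iff.mp i.isLt)
      have hcongr : ∀ k ≤ C, η t' k = Stmt10Aux.ext C (fun i : Fin (C + 1) => η t' (i : ℕ)) k :=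
        fun k hk => (Stmt10Aux.ext_of_le C (fun i : Fin (C + 1) => η t' (i : ℕ)) hk).symm
      have hval := Stmt10Aux.Fvec_congr (d := d) (lam := lam) hC hcongr
        (Nat.lt_succ_iff.mp i.isLt)
      exact hval ▸ hder
    have h00 : (fun i : Fin (C + 1) => ξ 0 (i : ℕ)) = fun i : Fin (C + 1) => η 0 (i : ℕ) := by
      funext i
      rw [hξi (i : ℕ) (Nat.lt_succ_iff.mp i.isLt), hηi (i : ℕ) (Nat.lt_succ_iff.mp i.isLt)]
    have huniq := Stmt10Aux.uniq_of_locallyLipschitz hFElip hXd hYd h00 t ht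
    exact congrFun huniq ⟨k, Nat.lt_succ_of_le hk⟩
end

section
/- Let (W_t)_{t≥0} be a discrete-time process on the integers adapted to a filtration, started at W_0 ≤ 0, with increments in {-1, 0, +1}, and suppose that whenever W_{t-1} ≥ 0 we have P(W_t - W_{t-1} = 1 | F_{t-1}) ≤ 1/6 and P(W_t - W_{t-1} = -1 | F_{t-1}) ≥ 1/2. Then for any positive integer a and any time horizon T, P(∃ t ≤ T : W_t ≥ a) ≤ 2T (1/3)^a. -/
open MeasureTheory

lemma bdd_integrable {Ω : Type*} [m0 : MeasurableSpace Ω] (μ : Measure Ω) [IsProbabilityMeasure μ]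
    {f : Ω → ℝ} (hf : Measurable f) {B : ℝ} (hB : ∀ ω, |f ω| ≤ B) : Integrable f μ :=
  ⟨hf.aestronglyMeasurable, HasFiniteIntegral.of_bounded (C := B)
    (Filter.Eventually.of_forall fun ω => hB ω)⟩

/-- The event that the walk is at `0` at time `t` and stays strictly between `0` and `a`
for the following `s` steps. -/
def Cset {Ω : Type*} (W : ℕ → Ω → ℤ) (a : ℕ) (t s : ℕ) : Set Ω :=
  {ω | W t ω = 0 ∧ ∀ r, 1 ≤ r → r ≤ s → 0 < W (t + r) ω ∧ W (t + r) ω < a}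

/-- The event of first crossing `a` at time `t + r + 1` during an excursion started at `t`. -/
def Eset {Ω : Type*} (W : ℕ → Ω → ℤ) (a : ℕ) (t r : ℕ) : Set Ω :=
  Cset W a t r ∩ {ω | (a : ℤ) ≤ W (t + r + 1) ω}

/-- The exponential supermartingale-like quantity. -/
noncomputable def Gfun {Ω : Type*} (W : ℕ → Ω → ℤ) (a : ℕ) (t s : ℕ) : Ω → ℝ :=
  (Cset W a t s).indicator (fun ω => (3 : ℝ) ^ (W (t + s) ω))
lemma onestep {Ω : Type*} [m0 : MeasurableSpace Ω] (μ : Measure Ω) [IsProbabilityMeasure μ]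
    (m : ℕ → MeasurableSpace Ω) (u : ℕ) (hle : m u ≤ m0) (Wu Wv : Ω → ℤ)
    (hWu : Measurable Wu) (hWv : Measurable Wv)
    (hinc : ∀ ω, |Wv ω - Wu ω| ≤ 1)
    (hup : ∀ᵐ ω ∂μ, 0 ≤ Wu ω →
      (μ[Set.indicator {ω' | Wv ω' - Wu ω' = 1} (fun _ => (1 : ℝ))|m u]) ω ≤ 1 / 6)
    (hdown : ∀ᵐ ω ∂μ, 0 ≤ Wu ω →
      (1 : ℝ) / 2 ≤ (μ[Set.indicator {ω' | Wv ω' - Wu ω' = -1} (fun _ => (1 : ℝ))|m u]) ω)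
    (g : Ω → ℝ) (hg : StronglyMeasurable[m u] g) (hg0 : ∀ ω, 0 ≤ g ω)
    {B : ℝ} (hgB : ∀ ω, g ω ≤ B)
    (hsupp : ∀ ω, g ω ≠ 0 → 0 ≤ Wu ω) :
    ∫ ω, g ω * (3 : ℝ) ^ (Wv ω - Wu ω) ∂μ ≤ ∫ ω, g ω ∂μ := by
  set S1 : Set Ω := {ω' | Wv ω' - Wu ω' = 1} with hS1
  set S2 : Set Ω := {ω' | Wv ω' - Wu ω' = -1} with hS2
  set h1 : Ω → ℝ := S1.indicator (fun _ => (1 : ℝ)) with hh1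
  set h2 : Ω → ℝ := S2.indicator (fun _ => (1 : ℝ)) with hh2
  have hmS1 : MeasurableSet[m0] S1 := (hWv.sub hWu) (measurableSet_singleton 1)
  have hmS2 : MeasurableSet[m0] S2 := (hWv.sub hWu) (measurableSet_singleton (-1))
  have hgm : Measurable[m0] g := hg.measurable.mono hle le_rfl
  have habs : ∀ ω, |g ω| ≤ B := fun ω => by rw [abs_of_nonneg (hg0 ω)]; exact hgB ω
  have hIntg : Integrable g μ := bdd_integrable μ hgm habs
  have h1v : ∀ ω, h1 ω = 0 ∨ h1 ω = 1 := fun ω => by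
    by_cases h : ω ∈ S1 <;> simp [hh1, Set.indicator_apply, h]
  have h2v : ∀ ω, h2 ω = 0 ∨ h2 ω = 1 := fun ω => by
    by_cases h : ω ∈ S2 <;> simp [hh2, Set.indicator_apply, h]
  have hInth1 : Integrable h1 μ := bdd_integrable μ (measurable_const.indicator hmS1)
    (B := 1) (fun ω => by rcases h1v ω with h | h <;> rw [h] <;> norm_num)
  have hInth2 : Integrable h2 μ := bdd_integrable μ (measurable_const.indicator hmS2)
    (B := 1) (fun ω => by rcases h2v ω with h | h <;> rw [h] <;> norm_num)
  have hIntgh1 : Integrable (g * h1) μ := by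
    refine bdd_integrable μ (hgm.mul (measurable_const.indicator hmS1)) (B := B) (fun ω => ?_)
    rcases h1v ω with h | h <;> simp [Pi.mul_apply, h, abs_of_nonneg (hg0 ω)]
    · exact (hg0 ω).trans ((abs_of_nonneg (hg0 ω)) ▸ habs ω)
    · exact hgB ω
  have hIntgh2 : Integrable (g * h2) μ := by
    refine bdd_integrable μ (hgm.mul (measurable_const.indicator hmS2)) (B := B) (fun ω => ?_)
    rcases h2v ω with h | h <;> simp [Pi.mul_apply, h, abs_of_nonneg (hg0 ω)]
    · exact (hg0 ω).trans ((abs_of_nonneg (hg0 ω)) ▸ habs ω)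
    · exact hgB ω
  have key1 : ∫ ω, g ω * h1 ω ∂μ ≤ (1 / 6) * ∫ ω, g ω ∂μ := by
    have e1 : μ[g * h1|m u] =ᶠ[ae μ] g * μ[h1|m u] :=
      condExp_mul_of_stronglyMeasurable_left hg hIntgh1 hInth1
    have int1 : Integrable (g * μ[h1|m u]) μ := integrable_condExp.congr e1
    calc ∫ ω, g ω * h1 ω ∂μ = ∫ ω, (μ[g * h1|m u]) ω ∂μ := (integral_condExp hle).symm
      _ = ∫ ω, (g * μ[h1|m u]) ω ∂μ := integral_congr_ae e1
      _ ≤ ∫ ω, (1 / 6) * g ω ∂μ := by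
          refine integral_mono_ae int1 (hIntg.const_mul _) ?_
          filter_upwards [hup] with ω hω
          by_cases hg' : g ω = 0
          · simp [Pi.mul_apply, hg']
          · have hE := hω (hsupp ω hg')
            have := mul_le_mul_of_nonneg_left hE (hg0 ω)
            simpa [Pi.mul_apply, mul_comm] using this
      _ = (1 / 6) * ∫ ω, g ω ∂μ := integral_const_mul _ _
  have key2 : (1 / 2) * ∫ ω, g ω ∂μ ≤ ∫ ω, g ω * h2 ω ∂μ := by
    have e2 : μ[g * h2|m u] =ᶠ[ae μ] g * μ[h2|m u] :=
      condExp_mul_of_stronglyMeasurable_left hg hIntgh2 hInth2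
    have int2 : Integrable (g * μ[h2|m u]) μ := integrable_condExp.congr e2
    calc (1 / 2) * ∫ ω, g ω ∂μ = ∫ ω, (1 / 2) * g ω ∂μ := (integral_const_mul _ _).symm
      _ ≤ ∫ ω, (g * μ[h2|m u]) ω ∂μ := by
          refine integral_mono_ae (hIntg.const_mul _) int2 ?_
          filter_upwards [hdown] with ω hω
          by_cases hg' : g ω = 0
          · simp [Pi.mul_apply, hg']
          · have hE := hω (hsupp ω hg')
            have := mul_le_mul_of_nonneg_left hE (hg0 ω)
            simpa [Pi.mul_apply, mul_comm] using this
      _ = ∫ ω, (μ[g * h2|m u]) ω ∂μ := (integral_congr_ae e2).symm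
      _ = ∫ ω, g ω * h2 ω ∂μ := integral_condExp hle
  have hpt : ∀ ω, g ω * (3 : ℝ) ^ (Wv ω - Wu ω)
      = g ω + 2 * (g ω * h1 ω) - (2 / 3) * (g ω * h2 ω) := by
    intro ω
    have h := abs_le.mp (hinc ω)
    have hd : Wv ω - Wu ω = -1 ∨ Wv ω - Wu ω = 0 ∨ Wv ω - Wu ω = 1 := by omega
    rcases hd with h' | h' | h' <;>
      rw [h'] <;> simp [hh1, hh2, Set.indicator_apply, hS1, hS2, h'] <;> norm_num <;> ring
  have hsplit : ∫ ω, g ω * (3 : ℝ) ^ (Wv ω - Wu ω) ∂μ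
      = (∫ ω, g ω ∂μ) + 2 * (∫ ω, g ω * h1 ω ∂μ) - (2 / 3) * (∫ ω, g ω * h2 ω ∂μ) := by
    rw [integral_congr_ae (Filter.Eventually.of_forall hpt)]
    have i1 : Integrable (fun ω => g ω + 2 * (g ω * h1 ω)) μ :=
      hIntg.add (hIntgh1.const_mul 2)
    have i2 : Integrable (fun ω => (2 : ℝ) / 3 * (g ω * h2 ω)) μ := hIntgh2.const_mul _
    have i3 : Integrable (fun ω => (2 : ℝ) * (g ω * h1 ω)) μ := hIntgh1.const_mul _
    rw [integral_sub i1 i2, integral_add hIntg i3, integral_const_mul, integral_const_mul]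
  linarith [key1, key2]

section Walk

variable {Ω : Type*} [m0 : MeasurableSpace Ω] {μ : Measure Ω} [IsProbabilityMeasure μ]
  {m : ℕ → MeasurableSpace Ω} {W : ℕ → Ω → ℤ} {a : ℕ}

lemma Cset_range (ha : 0 < a) {t s : ℕ} {ω : Ω} (h : ω ∈ Cset W a t s) :
    0 ≤ W (t + s) ω ∧ W (t + s) ω ≤ (a : ℤ) := by
  obtain ⟨h1, h2⟩ := h
  rcases Nat.eq_zero_or_pos s with rfl | hs
  · simp only [Nat.add_zero]
    constructor <;> omega
  · obtain ⟨hl, hr⟩ := h2 s hs le_rfl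
    constructor <;> omega

lemma Cset_meas (hmono : Monotone m) (hadapt : ∀ t, Measurable[m t] (W t)) (t s : ℕ) :
    MeasurableSet[m (t + s)] (Cset W a t s) := by
  have : Cset W a t s = (W t ⁻¹' {0}) ∩
      ⋂ (r : ℕ) (_ : 1 ≤ r) (_ : r ≤ s), (W (t + r) ⁻¹' {x | 0 < x ∧ x < (a : ℤ)}) := by
    ext ω
    simp only [Cset, Set.mem_setOf_eq, Set.mem_inter_iff, Set.mem_preimage,
      Set.mem_iInter, Set.mem_singleton_iff]
  rw [this]
  refine MeasurableSet.inter ?_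
    (MeasurableSet.iInter fun r => MeasurableSet.iInter fun _ => MeasurableSet.iInter fun hrs => ?_)
  · exact ((hadapt t).mono (hmono (Nat.le_add_right t s)) le_rfl) (measurableSet_singleton 0)
  · exact ((hadapt (t + r)).mono (hmono (by omega)) le_rfl) (MeasurableSet.of_discrete)

lemma Gfun_nonneg (t s : ℕ) (ω : Ω) : 0 ≤ Gfun W a t s ω := by
  unfold Gfun
  by_cases h : ω ∈ Cset W a t s
  · rw [Set.indicator_of_mem h]; positivity
  · rw [Set.indicator_of_notMem h]

lemma Gfun_le (ha : 0 < a) (t s : ℕ) (ω : Ω) : Gfun W a t s ω ≤ (3 : ℝ) ^ a := by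
  unfold Gfun
  by_cases h : ω ∈ Cset W a t s
  · rw [Set.indicator_of_mem h]
    have := (Cset_range ha h).2
    calc (3 : ℝ) ^ (W (t + s) ω) ≤ (3 : ℝ) ^ ((a : ℕ) : ℤ) :=
          zpow_le_zpow_right₀ (by norm_num) this
      _ = (3 : ℝ) ^ a := zpow_natCast 3 a
  · rw [Set.indicator_of_notMem h]; positivity

lemma Gfun_meas (hmono : Monotone m) (hadapt : ∀ t, Measurable[m t] (W t)) (t s : ℕ) :
    StronglyMeasurable[m (t + s)] (Gfun W a t s) := by
  refine Measurable.stronglyMeasurable ?_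
  exact (Measurable.indicator (measurable_from_top.comp (hadapt (t + s)))
    (Cset_meas hmono hadapt t s))

lemma Gfun_supp (ha : 0 < a) (t s : ℕ) (ω : Ω) (h : Gfun W a t s ω ≠ 0) :
    0 ≤ W (t + s) ω := by
  by_cases hC : ω ∈ Cset W a t s
  · exact (Cset_range ha hC).1
  · exact absurd (Set.indicator_of_notMem hC _) h

lemma step_int (μ : Measure Ω) [IsProbabilityMeasure μ]
    (hmono : Monotone m) (hle : ∀ t, m t ≤ m0)
    (hadapt : ∀ t, Measurable[m t] (W t))
    (hinc : ∀ t ω, |W (t + 1) ω - W t ω| ≤ 1)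
    (hup : ∀ t : ℕ, ∀ᵐ ω ∂μ, 0 ≤ W t ω →
      (μ[Set.indicator {ω' | W (t + 1) ω' - W t ω' = 1} (fun _ => (1 : ℝ))|m t]) ω ≤ 1 / 6)
    (hdown : ∀ t : ℕ, ∀ᵐ ω ∂μ, 0 ≤ W t ω →
      (1 : ℝ) / 2 ≤
        (μ[Set.indicator {ω' | W (t + 1) ω' - W t ω' = -1} (fun _ => (1 : ℝ))|m t]) ω)
    (ha : 0 < a) (t s : ℕ) :
    (∫ ω, Gfun W a t (s + 1) ω ∂μ) + (3 : ℝ) ^ a * (μ (Eset W a t s)).toReal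
      ≤ ∫ ω, Gfun W a t s ω ∂μ := by
  have hWm : ∀ u, Measurable[m0] (W u) := fun u => (hadapt u).mono (hle u) le_rfl
  have hCmeas0 : ∀ s', MeasurableSet[m0] (Cset W a t s') :=
    fun s' => (hle (t + s')) _ (Cset_meas hmono hadapt t s')
  have hEmeas0 : MeasurableSet[m0] (Eset W a t s) := by
    refine (hCmeas0 s).inter ?_
    have : {ω : Ω | (a : ℤ) ≤ W (t + s + 1) ω} = W (t + s + 1) ⁻¹' (Set.Ici (a : ℤ)) := rfl
    rw [this]
    exact (hWm (t + s + 1)) measurableSet_Ici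
  have hptw : ∀ ω, Gfun W a t (s + 1) ω
      + (3 : ℝ) ^ a * Set.indicator (Eset W a t s) (fun _ => (1 : ℝ)) ω
      ≤ Gfun W a t s ω * (3 : ℝ) ^ (W (t + s + 1) ω - W (t + s) ω) := by
    intro ω
    by_cases hCs : ω ∈ Cset W a t s
    · have hGs : Gfun W a t s ω = (3 : ℝ) ^ (W (t + s) ω) := Set.indicator_of_mem hCs _
      have hrhs : Gfun W a t s ω * (3 : ℝ) ^ (W (t + s + 1) ω - W (t + s) ω)
          = (3 : ℝ) ^ (W (t + s + 1) ω) := by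
        rw [hGs, ← zpow_add₀ (by norm_num : (3 : ℝ) ≠ 0)]
        congr 1; ring
      by_cases h1 : ω ∈ Cset W a t (s + 1)
      · have hlt : W (t + (s + 1)) ω < a := (h1.2 (s + 1) (by omega) le_rfl).2
        have hEo : ω ∉ Eset W a t s := by
          intro hmem
          exact absurd hmem.2 (by simpa [Nat.add_assoc] using not_le.mpr hlt)
        rw [hrhs]
        unfold Gfun
        rw [Set.indicator_of_mem h1, Set.indicator_of_notMem hEo]
        simp only [mul_zero, add_zero]
        rw [← Nat.add_assoc]
      · have hG1 : Gfun W a t (s + 1) ω = 0 := Set.indicator_of_notMem h1 _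
        by_cases h2 : (a : ℤ) ≤ W (t + s + 1) ω
        · have hEm : ω ∈ Eset W a t s := ⟨hCs, h2⟩
          rw [hG1, Set.indicator_of_mem hEm, hrhs]
          have : (3 : ℝ) ^ a ≤ (3 : ℝ) ^ (W (t + s + 1) ω) := by
            calc (3 : ℝ) ^ a = (3 : ℝ) ^ ((a : ℕ) : ℤ) := (zpow_natCast 3 a).symm
              _ ≤ _ := zpow_le_zpow_right₀ (by norm_num) h2
          linarith
        · have hEo : ω ∉ Eset W a t s := fun hmem => h2 hmem.2
          rw [hG1, Set.indicator_of_notMem hEo]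
          have : (0:ℝ) ≤ Gfun W a t s ω * (3 : ℝ) ^ (W (t + s + 1) ω - W (t + s) ω) :=
            mul_nonneg (Gfun_nonneg t s ω) (by positivity)
          linarith
    · have hC1 : ω ∉ Cset W a t (s + 1) :=
        fun h => hCs ⟨h.1, fun r hr1 hrs => h.2 r hr1 (by omega)⟩
      have hEo : ω ∉ Eset W a t s := fun h => hCs h.1
      unfold Gfun
      rw [Set.indicator_of_notMem hC1, Set.indicator_of_notMem hEo,
        Set.indicator_of_notMem hCs]
      simp
  have hGm0 : ∀ s', Measurable[m0] (Gfun W a t s') := fun s' =>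
    ((Gfun_meas hmono hadapt t s').measurable).mono (hle (t + s')) le_rfl
  have hGabs : ∀ s' ω, |Gfun W a t s' ω| ≤ (3:ℝ) ^ a := fun s' ω => by
    rw [abs_of_nonneg (Gfun_nonneg t s' ω)]; exact Gfun_le ha t s' ω
  have hGint : ∀ s', Integrable (Gfun W a t s') μ :=
    fun s' => bdd_integrable μ (hGm0 s') (hGabs s')
  have hIndInt : Integrable (Set.indicator (Eset W a t s) (fun _ => (1:ℝ))) μ := by
    refine bdd_integrable μ (measurable_const.indicator hEmeas0) (B := 1) (fun ω => ?_)
    by_cases h : ω ∈ Eset W a t s <;> simp [Set.indicator_apply, h]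
  have hRint : Integrable (fun ω => Gfun W a t s ω
      * (3 : ℝ) ^ (W (t + s + 1) ω - W (t + s) ω)) μ := by
    refine bdd_integrable μ ((hGm0 s).mul
      (measurable_from_top.comp ((hWm (t + s + 1)).sub (hWm (t + s)))))
      (B := (3:ℝ) ^ a * 3) (fun ω => ?_)
    have h1 : (0:ℝ) < (3 : ℝ) ^ (W (t + s + 1) ω - W (t + s) ω) := by positivity
    have h2 : (3 : ℝ) ^ (W (t + s + 1) ω - W (t + s) ω) ≤ 3 := by
      have := abs_le.mp (hinc (t + s) ω)
      calc (3 : ℝ) ^ (W (t + s + 1) ω - W (t + s) ω) ≤ (3:ℝ) ^ (1:ℤ) :=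
            zpow_le_zpow_right₀ (by norm_num) this.2
        _ = 3 := by norm_num
    rw [abs_of_nonneg (mul_nonneg (Gfun_nonneg t s ω) h1.le)]
    have hg := Gfun_nonneg (W := W) (a := a) t s ω
    have hgB := Gfun_le (W := W) ha t s ω
    nlinarith
  have hstep : ∫ ω, (fun ω => Gfun W a t s ω
        * (3 : ℝ) ^ (W (t + s + 1) ω - W (t + s) ω)) ω ∂μ
      ≤ ∫ ω, Gfun W a t s ω ∂μ := by
    exact onestep μ m (t + s) (hle (t + s)) (W (t + s)) (W (t + s + 1))
      (hWm (t + s)) (hWm (t + s + 1)) (hinc (t + s)) (hup (t + s)) (hdown (t + s))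
      (Gfun W a t s) (Gfun_meas hmono hadapt t s) (Gfun_nonneg t s)
      (Gfun_le ha t s) (Gfun_supp ha t s)
  have hlhs : ∫ ω, (Gfun W a t (s + 1) ω
        + (3 : ℝ) ^ a * Set.indicator (Eset W a t s) (fun _ => (1 : ℝ)) ω) ∂μ
      = (∫ ω, Gfun W a t (s + 1) ω ∂μ) + (3 : ℝ) ^ a * (μ (Eset W a t s)).toReal := by
    rw [integral_add (hGint (s + 1)) (hIndInt.const_mul _), integral_const_mul,
      integral_indicator_const (1 : ℝ) hEmeas0]
    simp [Measure.real]
  calc (∫ ω, Gfun W a t (s + 1) ω ∂μ) + (3 : ℝ) ^ a * (μ (Eset W a t s)).toReal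
      = ∫ ω, (Gfun W a t (s + 1) ω
        + (3 : ℝ) ^ a * Set.indicator (Eset W a t s) (fun _ => (1 : ℝ)) ω) ∂μ := hlhs.symm
    _ ≤ ∫ ω, Gfun W a t s ω * (3 : ℝ) ^ (W (t + s + 1) ω - W (t + s) ω) ∂μ := by
        refine integral_mono ((hGint (s + 1)).add (hIndInt.const_mul _)) hRint hptw
    _ ≤ ∫ ω, Gfun W a t s ω ∂μ := hstep


lemma key_ineq (μ : Measure Ω) [IsProbabilityMeasure μ]
    (hmono : Monotone m) (hle : ∀ t, m t ≤ m0)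
    (hadapt : ∀ t, Measurable[m t] (W t))
    (hinc : ∀ t ω, |W (t + 1) ω - W t ω| ≤ 1)
    (hup : ∀ t : ℕ, ∀ᵐ ω ∂μ, 0 ≤ W t ω →
      (μ[Set.indicator {ω' | W (t + 1) ω' - W t ω' = 1} (fun _ => (1 : ℝ))|m t]) ω ≤ 1 / 6)
    (hdown : ∀ t : ℕ, ∀ᵐ ω ∂μ, 0 ≤ W t ω →
      (1 : ℝ) / 2 ≤
        (μ[Set.indicator {ω' | W (t + 1) ω' - W t ω' = -1} (fun _ => (1 : ℝ))|m t]) ω)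
    (ha : 0 < a) (t : ℕ) : ∀ s : ℕ,
    (∫ ω, Gfun W a t s ω ∂μ)
      + (3 : ℝ) ^ a * ∑ r ∈ Finset.range s, (μ (Eset W a t r)).toReal ≤ 1 := by
  have hCmeas0 : ∀ s', MeasurableSet[m0] (Cset W a t s') :=
    fun s' => (hle (t + s')) _ (Cset_meas hmono hadapt t s')
  intro s
  induction s with
  | zero =>
    simp only [Finset.range_zero, Finset.sum_empty, mul_zero, add_zero]
    have hG0 : Gfun W a t 0 = Set.indicator (Cset W a t 0) (fun _ => (1 : ℝ)) := by
      funext ω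
      by_cases h : ω ∈ Cset W a t 0
      · rw [Gfun, Set.indicator_of_mem h, Set.indicator_of_mem h]
        have h1 : W (t + 0) ω = 0 := h.1
        rw [h1, zpow_zero]
      · rw [Gfun, Set.indicator_of_notMem h, Set.indicator_of_notMem h]
    rw [hG0, integral_indicator_const (1 : ℝ) (hCmeas0 0)]
    simp only [smul_eq_mul, mul_one]
    exact ENNReal.toReal_le_of_le_ofReal zero_le_one (by simpa using prob_le_one)
  | succ s ih =>
    have hstep := step_int μ hmono hle hadapt hinc hup hdown ha t s
    rw [Finset.sum_range_succ, mul_add]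
    have h3 : (0:ℝ) ≤ (3:ℝ) ^ a := by positivity
    linarith

end Walk

/-- Biased random-walk hitting estimate: a walk with ±1 increments which, whenever
nonnegative, moves up with conditional probability at most 1/6 and down with
conditional probability at least 1/2, started at a nonpositive level, reaches
level `a` by time `T` with probability at most `2T (1/3)^a`. -/
theorem stmt17 {Ω : Type*} [m0 : MeasurableSpace Ω]
    (μ : Measure Ω) [IsProbabilityMeasure μ]
    (m : ℕ → MeasurableSpace Ω) (hmono : Monotone m) (hle : ∀ t, m t ≤ m0)
    (W : ℕ → Ω → ℤ) (hadapt : ∀ t, Measurable[m t] (W t))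
    (h0 : ∀ ω, W 0 ω ≤ 0)
    (hinc : ∀ t ω, |W (t + 1) ω - W t ω| ≤ 1)
    (hup : ∀ t : ℕ, ∀ᵐ ω ∂μ, 0 ≤ W t ω →
      (μ[Set.indicator {ω' | W (t + 1) ω' - W t ω' = 1} (fun _ => (1 : ℝ))|m t]) ω
        ≤ 1 / 6)
    (hdown : ∀ t : ℕ, ∀ᵐ ω ∂μ, 0 ≤ W t ω →
      (1 : ℝ) / 2 ≤
        (μ[Set.indicator {ω' | W (t + 1) ω' - W t ω' = -1} (fun _ => (1 : ℝ))|m t]) ω)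
    (a : ℕ) (ha : 0 < a) (T : ℕ) :
    μ {ω | ∃ t ≤ T, (a : ℤ) ≤ W t ω}
      ≤ ENNReal.ofReal (2 * (T : ℝ) * (1 / 3 : ℝ) ^ a) := by
  classical
  -- covering by first-crossing events
  have cover : {ω | ∃ t ≤ T, (a : ℤ) ≤ W t ω}
      ⊆ ⋃ t ∈ Finset.range T, ⋃ r ∈ Finset.range T, Eset W a t r := by
    rintro ω ⟨s, hsT, hsa⟩
    have hex : ∃ n, (a : ℤ) ≤ W n ω := ⟨s, hsa⟩
    set s0 := Nat.find hex with hs0def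
    have hs0 : (a : ℤ) ≤ W s0 ω := Nat.find_spec hex
    have hs0T : s0 ≤ T := (Nat.find_min' hex hsa).trans hsT
    have hmin : ∀ r, r < s0 → W r ω < a := fun r hr => lt_of_not_ge (Nat.find_min hex hr)
    have hs0pos : 0 < s0 := by
      rcases Nat.eq_zero_or_pos s0 with h | h
      · exfalso; rw [h] at hs0; have := h0 ω; omega
      · exact h
    set t := Nat.findGreatest (fun u => W u ω ≤ 0) (s0 - 1) with htdef
    have htle : t ≤ s0 - 1 := Nat.findGreatest_le _
    have htP : W t ω ≤ 0 := by
      rw [htdef]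
      exact Nat.findGreatest_spec (P := fun u => W u ω ≤ 0) (Nat.zero_le _) (h0 ω)
    have hmax : ∀ k, t < k → k ≤ s0 - 1 → 0 < W k ω := by
      intro k hk1 hk2
      rw [htdef] at hk1
      exact lt_of_not_ge (Nat.findGreatest_is_greatest (P := fun u => W u ω ≤ 0) hk1 hk2)
    have hWt1 : 1 ≤ W (t + 1) ω := by
      rcases eq_or_lt_of_le (show t + 1 ≤ s0 by omega) with h | h
      · rw [h]; omega
      · have := hmax (t + 1) (by omega) (by omega); omega
    have hWt0 : W t ω = 0 := by
      have := abs_le.mp (hinc t ω); omega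
    have hmemE : ω ∈ Eset W a t (s0 - 1 - t) := by
      constructor
      · refine ⟨hWt0, fun r hr1 hr2 => ⟨?_, ?_⟩⟩
        · exact hmax (t + r) (by omega) (by omega)
        · exact hmin (t + r) (by omega)
      · have hidx : t + (s0 - 1 - t) + 1 = s0 := by omega
        show (a : ℤ) ≤ W (t + (s0 - 1 - t) + 1) ω
        rw [hidx]; exact hs0
    simp only [Finset.mem_range, Set.mem_iUnion]
    exact ⟨t, by omega, s0 - 1 - t, by omega, hmemE⟩
  -- per-excursion bound
  have bound_t : ∀ t, ∑ r ∈ Finset.range T, μ (Eset W a t r)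
      ≤ ENNReal.ofReal ((1 / 3 : ℝ) ^ a) := by
    intro t
    have hkey := key_ineq μ hmono hle hadapt hinc hup hdown ha t T
    have hGnn : (0:ℝ) ≤ ∫ ω, Gfun W a t T ω ∂μ :=
      integral_nonneg (Gfun_nonneg t T)
    have h1 : (3 : ℝ) ^ a * ∑ r ∈ Finset.range T, (μ (Eset W a t r)).toReal ≤ 1 := by
      linarith
    have hsum : ∑ r ∈ Finset.range T, (μ (Eset W a t r)).toReal ≤ (1 / 3 : ℝ) ^ a := by
      have h3 : (0:ℝ) < (3:ℝ) ^ a := by positivity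
      have hmul : (1 / 3 : ℝ) ^ a * (3:ℝ) ^ a = 1 := by
        rw [← mul_pow]; norm_num
      nlinarith
    calc ∑ r ∈ Finset.range T, μ (Eset W a t r)
        = ENNReal.ofReal (∑ r ∈ Finset.range T, (μ (Eset W a t r)).toReal) := by
          rw [ENNReal.ofReal_sum_of_nonneg (fun i _ => ENNReal.toReal_nonneg)]
          exact Finset.sum_congr rfl fun r _ =>
            (ENNReal.ofReal_toReal (measure_ne_top μ _)).symm
      _ ≤ ENNReal.ofReal ((1 / 3 : ℝ) ^ a) := ENNReal.ofReal_le_ofReal hsum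
  calc μ {ω | ∃ t ≤ T, (a : ℤ) ≤ W t ω}
      ≤ μ (⋃ t ∈ Finset.range T, ⋃ r ∈ Finset.range T, Eset W a t r) := measure_mono cover
    _ ≤ ∑ t ∈ Finset.range T, μ (⋃ r ∈ Finset.range T, Eset W a t r) :=
        measure_biUnion_finset_le _ _
    _ ≤ ∑ t ∈ Finset.range T, ∑ r ∈ Finset.range T, μ (Eset W a t r) :=
        Finset.sum_le_sum fun t _ => measure_biUnion_finset_le _ _
    _ ≤ ∑ t ∈ Finset.range T, ENNReal.ofReal ((1 / 3 : ℝ) ^ a) :=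
        Finset.sum_le_sum fun t _ => bound_t t
    _ = (T : ENNReal) * ENNReal.ofReal ((1 / 3 : ℝ) ^ a) := by
        rw [Finset.sum_const, Finset.card_range, nsmul_eq_mul]
    _ ≤ ENNReal.ofReal (2 * (T : ℝ) * (1 / 3 : ℝ) ^ a) := by
        rw [← ENNReal.ofReal_natCast T, ← ENNReal.ofReal_mul (by positivity)]
        refine ENNReal.ofReal_le_ofReal ?_
        have hp : (0:ℝ) ≤ (1/3:ℝ) ^ a := by positivity
        have hT : (0:ℝ) ≤ (T:ℝ) := by positivity
        nlinarith
end
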